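/- arXiv:2102.05002 — 12 statements merged into one kernel-verified Lean document; each statement's English description precedes it below -/
import Mathlib

section
/- If (X, d) is an ultrametric space, then every slowly oscillating function f : X → ℝ is glacially oscillating. -/
open Metric Bornology Set

/-- A function `f : X → ℝ` is slowly oscillating if for all `r, ε > 0` there is a bounded
subset `K` of `X` such that `x, y ∉ K` and `dist x y < r` imply `|f x - f y| < ε`. -/
def SlowlyOscillating {X : Type*} [MetricSpace X] (f : X → ℝ) : Prop :=
  ∀ r ε : ℝ, 0 < r → 0 < ε → ∃ K : Set X, IsBounded K ∧
    ∀ x y : X, x ∉ K → y ∉ K → dist x y < r → |f x - f y| < ε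

/-- A glacial scale on `X`: a sequence of pairs `(K i, n i)` of bounded subsets of `X` and
natural numbers such that every pair `(K, r)` of a bounded set and a positive real is
dominated by some `(K i, n i)`. -/
def IsGlacialScale {X : Type*} [MetricSpace X] (S : ℕ → Set X × ℕ) : Prop :=
  (∀ i, IsBounded (S i).1) ∧
  ∀ (K : Set X) (r : ℝ), IsBounded K → 0 < r → ∃ i, K ⊆ (S i).1 ∧ r < ((S i).2 : ℝ)

/-- An `S`-chain for a glacial scale `S`: consecutive points avoid some `K m` and are at
distance at most `n m` from each other. -/
def IsSChain {X : Type*} [MetricSpace X] (S : ℕ → Set X × ℕ) {n : ℕ}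
    (x : Fin (n + 1) → X) : Prop :=
  ∀ i : Fin n, ∃ m : ℕ, x i.castSucc ∉ (S m).1 ∧ x i.succ ∉ (S m).1 ∧
    dist (x i.castSucc) (x i.succ) ≤ ((S m).2 : ℝ)

/-- A function `f : X → ℝ` is glacially oscillating if for each `ε > 0` there is a glacial
scale `S` such that `|f x₁ - f xₙ| < ε` for every `S`-chain `x₁, …, xₙ`. -/
def GlaciallyOscillating {X : Type*} [MetricSpace X] (f : X → ℝ) : Prop :=
  ∀ ε : ℝ, 0 < ε → ∃ S : ℕ → Set X × ℕ, IsGlacialScale S ∧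
    ∀ (n : ℕ) (x : Fin (n + 1) → X), IsSChain S x →
      |f (x 0) - f (x (Fin.last n))| < ε

/-- Proposition 3.4: In an ultrametric space every slowly oscillating function is
glacially oscillating. -/
theorem slowlyOscillating_glaciallyOscillating_of_ultrametric
    {X : Type*} [MetricSpace X]
    (hultra : ∀ x y z : X, dist x y ≤ max (dist x z) (dist z y))
    (f : X → ℝ) (hf : SlowlyOscillating f) :
    GlaciallyOscillating f := by
  intro ε hε
  by_cases hX : Nonempty X
  · obtain ⟨x0⟩ := hX
    have key : ∀ m : ℕ, ∃ K : Set X, IsBounded K ∧ ∀ x y : X, x ∉ K → y ∉ K →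
        dist x y < (m : ℝ) + 2 → |f x - f y| < ε := fun m =>
      hf ((m : ℝ) + 2) ε (by positivity) hε
    choose K' hK'bdd hK' using key
    choose ρ hρ using fun m => (hK'bdd m).subset_closedBall x0
    set R : ℕ → ℝ := fun m => max (ρ m) ((m : ℝ) + 1) with hRdef
    refine ⟨fun m => (closedBall x0 (R m), m + 1), ⟨fun m => isBounded_closedBall, ?_⟩, ?_⟩
    · intro K r hK hr
      obtain ⟨ρK, hρK⟩ := hK.subset_closedBall x0
      obtain ⟨m, hm⟩ := exists_nat_gt (max ρK r)
      have h1 : ρK < (m : ℝ) := lt_of_le_of_lt (le_max_left _ _) hm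
      have h2 : r < (m : ℝ) := lt_of_le_of_lt (le_max_right _ _) hm
      refine ⟨m, hρK.trans (closedBall_subset_closedBall ?_), ?_⟩
      · exact le_trans (by linarith) (le_max_right (ρ m) ((m : ℝ) + 1))
      · push_cast; linarith
    · intro n x hchain
      -- every point of the chain is at the same distance from x0, and
      -- the distance from x 0 to x j is controlled
      have main : ∀ j : Fin (n + 1), dist (x j) x0 = dist (x 0) x0 ∧
          (j = 0 ∨ ∃ m, R m < dist (x 0) x0 ∧ dist (x 0) (x j) ≤ (m : ℝ) + 1) := by
        intro j
        induction j using Fin.induction with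
        | zero => exact ⟨rfl, Or.inl rfl⟩
        | succ i ih =>
          obtain ⟨hdeq, hcase⟩ := ih
          obtain ⟨m, hm1, hm2, hm3⟩ := hchain i
          simp only [mem_closedBall, not_le] at hm1 hm2
          have hstep : dist (x i.castSucc) (x i.succ) ≤ (m : ℝ) + 1 := by
            refine hm3.trans ?_
            push_cast; norm_num
          have hRm : R m < dist (x 0) x0 := by
            calc R m < dist (x i.castSucc) x0 := hm1
              _ = dist (x 0) x0 := hdeq
          have hm1' : (m : ℝ) + 1 < dist (x i.castSucc) x0 :=
            lt_of_le_of_lt (le_max_right (ρ m) _) hm1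
          have hstep' : dist (x i.castSucc) (x i.succ) < dist (x i.castSucc) x0 :=
            lt_of_le_of_lt hstep hm1'
          -- ultrametric: next point is at the same distance from x0
          have heq : dist (x i.succ) x0 = dist (x i.castSucc) x0 := by
            have hle : dist (x i.succ) x0 ≤ dist (x i.castSucc) x0 := by
              have := hultra (x i.succ) x0 (x i.castSucc)
              rw [dist_comm (x i.succ) (x i.castSucc)] at this
              exact this.trans (max_le (le_of_lt hstep') le_rfl)
            have hge : dist (x i.castSucc) x0 ≤ dist (x i.succ) x0 := by
              have h := hultra (x i.castSucc) x0 (x i.succ)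
              rcases le_max_iff.mp h with h' | h'
              · exact absurd h' (not_le_of_gt hstep')
              · exact h'
            linarith
          refine ⟨heq.trans hdeq, Or.inr ?_⟩
          rcases hcase with h0 | ⟨m', hm'1, hm'2⟩
          · refine ⟨m, hRm, ?_⟩
            rw [h0] at hstep
            exact hstep
          · -- dist (x 0) (x i.succ) ≤ max of the two bounds
            have htri : dist (x 0) (x i.succ) ≤
                max (dist (x 0) (x i.castSucc)) (dist (x i.castSucc) (x i.succ)) :=
              hultra (x 0) (x i.succ) (x i.castSucc)
            rcases le_total m m' with hmm | hmm
            · refine ⟨m', hm'1, htri.trans (max_le hm'2 (hstep.trans ?_))⟩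
              have : (m : ℝ) ≤ (m' : ℝ) := by exact_mod_cast hmm
              linarith
            · refine ⟨m, hRm, htri.trans (max_le (hm'2.trans ?_) hstep)⟩
              have : (m' : ℝ) ≤ (m : ℝ) := by exact_mod_cast hmm
              linarith
      rcases Nat.eq_zero_or_pos n with rfl | hn
      · have h0 : (Fin.last 0 : Fin 1) = 0 := rfl
        rw [h0]
        simpa using hε
      · have hlast := main (Fin.last n)
        have hne : (Fin.last n : Fin (n + 1)) ≠ 0 := by
          simp [Fin.ext_iff, Fin.last]
          omega
        obtain ⟨hdeq, hcase⟩ := hlast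
        rcases hcase with h0 | ⟨m, hm1, hm2⟩
        · exact absurd h0 hne
        · have hx0 : x 0 ∉ K' m := by
            intro hmem
            have := hρ m hmem
            simp only [mem_closedBall] at this
            have : dist (x 0) x0 ≤ R m := this.trans (le_max_left _ _)
            linarith
          have hxl : x (Fin.last n) ∉ K' m := by
            intro hmem
            have := hρ m hmem
            simp only [mem_closedBall] at this
            have : dist (x (Fin.last n)) x0 ≤ R m := this.trans (le_max_left _ _)
            rw [hdeq] at this
            linarith
          exact hK' m (x 0) (x (Fin.last n)) hx0 hxl (by linarith)
  · refine ⟨fun m => (∅, m), ⟨fun m => isBounded_empty, ?_⟩, ?_⟩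
    · intro K r hK hr
      obtain ⟨m, hm⟩ := exists_nat_gt r
      refine ⟨m, ?_, hm⟩
      intro y hy
      exact absurd ⟨y⟩ hX
    · intro n x _
      exact absurd ⟨x 0⟩ hX
end

section
/- Suppose f : (X, d_X) → (Y, d_Y) is a coarse, large scale continuous function between metric spaces and g : Y → ℝ. If g is glacially oscillating, then so is g ∘ f. -/
open Metric Bornology Set

/-- Proposition 3.6(a): if `f` is coarse and large scale continuous and `g` is glacially
oscillating, then `g ∘ f` is glacially oscillating. -/
theorem glaciallyOscillating_comp_of_coarse
    {X Y : Type*} [MetricSpace X] [MetricSpace Y] (f : X → Y) (g : Y → ℝ)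
    (hcoarse : ∀ K : Set Y, IsBounded K → IsBounded (f ⁻¹' K))
    (hlsc : ∀ m : ℝ, 0 < m → ∃ M : ℝ, 0 < M ∧
      ∀ x y : X, dist x y < m → dist (f x) (f y) < M)
    (hg : GlaciallyOscillating g) :
    GlaciallyOscillating (g ∘ f) := by
  intro ε hε
  obtain ⟨S, ⟨hSb, hSd⟩, hSchain⟩ := hg ε hε
  rcases isEmpty_or_nonempty X with hX | hX
  · refine ⟨fun j => (∅, j + 1), ⟨fun i => isBounded_empty, ?_⟩, ?_⟩
    · intro K r _ hr
      obtain ⟨j, hj⟩ := exists_nat_gt r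
      refine ⟨j, by simp [Set.eq_empty_of_isEmpty K], ?_⟩
      push_cast
      linarith
    · intro n x _
      exact (hX.false (x 0)).elim
  · obtain ⟨x₀⟩ := hX
    have hlsc' : ∀ a : ℕ, ∃ M : ℝ, 0 < M ∧
        ∀ x y : X, dist x y ≤ ((a + 1 : ℕ) : ℝ) → dist (f x) (f y) < M := by
      intro a
      obtain ⟨M, hM, h⟩ := hlsc (a + 2) (by positivity)
      refine ⟨M, hM, fun x y hxy => h x y ?_⟩
      push_cast at hxy ⊢
      linarith
    choose M hMpos hM using hlsc'
    have himg : ∀ b : ℕ, IsBounded (f '' (closedBall x₀ b)) := by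
      intro b
      obtain ⟨M', _, h⟩ := hlsc (2 * b + 2) (by positivity)
      apply (isBounded_ball (x := f x₀) (r := M')).subset
      rintro _ ⟨x, hx, rfl⟩
      have hb : (0 : ℝ) ≤ (b : ℝ) := by positivity
      rw [mem_closedBall] at hx
      exact mem_ball.mpr (h x x₀ (by linarith))
    have hidx : ∀ a b : ℕ, ∃ i, f '' (closedBall x₀ b) ⊆ (S i).1 ∧ M a < ((S i).2 : ℝ) :=
      fun a b => hSd _ (M a) (himg b) (hMpos a)
    choose idx hidx1 hidx2 using hidx
    refine ⟨fun j => (f ⁻¹' (S (idx j.unpair.1 j.unpair.2)).1, j.unpair.1 + 1),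
      ⟨fun i => hcoarse _ (hSb _), ?_⟩, ?_⟩
    · intro K r hK hr
      obtain ⟨R, hR⟩ := hK.subset_closedBall x₀
      obtain ⟨a, ha⟩ := exists_nat_gt r
      obtain ⟨b, hb⟩ := exists_nat_gt R
      refine ⟨Nat.pair a b, ?_, ?_⟩
      · have hKb : K ⊆ closedBall x₀ b := hR.trans (closedBall_subset_closedBall hb.le)
        intro x hx
        simp only [Nat.unpair_pair]
        exact hidx1 a b ⟨x, hKb hx, rfl⟩
      · simp only [Nat.unpair_pair]
        push_cast
        linarith
    · intro n x hx
      have hchain : IsSChain S (fun i => f (x i)) := by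
        intro i
        obtain ⟨j, h1, h2, h3⟩ := hx i
        refine ⟨idx j.unpair.1 j.unpair.2, h1, h2, ?_⟩
        exact le_of_lt ((hM j.unpair.1 _ _ h3).trans (hidx2 _ _))
      exact hSchain n _ hchain
end

section
/- If (X, d) is a metric space of asymptotic dimension 0, then every slowly oscillating function f : X → ℝ is glacially oscillating. -/
open Metric Bornology Set

/-- Corollary 3.7: in a metric space of asymptotic dimension 0 every slowly oscillating
function is glacially oscillating. -/
theorem slowlyOscillating_glaciallyOscillating_of_asdimZero
    {X : Type*} [MetricSpace X]
    (hdim : ∀ r : ℝ, 0 < r → ∃ B : ℝ, 0 < B ∧ ∃ 𝒰 : Set (Set X),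
      (∀ x : X, ∃ U ∈ 𝒰, x ∈ U) ∧
      (𝒰.Pairwise fun U V => Disjoint U V) ∧
      (∀ U ∈ 𝒰, ∀ x ∈ U, ∀ y ∈ U, dist x y ≤ B) ∧
      (∀ U ∈ 𝒰, ∀ V ∈ 𝒰, U ≠ V → ∀ x ∈ U, ∀ y ∈ V, r < dist x y))
    (f : X → ℝ) (hf : SlowlyOscillating f) :
    GlaciallyOscillating f := by
  intro ε hε
  rcases isEmpty_or_nonempty X with hX | hX
  · refine ⟨fun i => (∅, i + 1), ⟨fun i => isBounded_empty, ?_⟩, ?_⟩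
    · intro K r hK hr
      refine ⟨⌈r⌉₊, fun x hx => (IsEmpty.false x).elim, ?_⟩
      calc r ≤ (⌈r⌉₊ : ℝ) := Nat.le_ceil r
        _ < ((⌈r⌉₊ + 1 : ℕ) : ℝ) := by push_cast; linarith
    · intro n x _
      exact (IsEmpty.false (x 0)).elim
  · obtain ⟨x₀⟩ := hX
    -- For each m, a cover at scale m+1
    have H : ∀ m : ℕ, ∃ B : ℝ, 0 < B ∧ ∃ 𝒰 : Set (Set X),
        (∀ x : X, ∃ U ∈ 𝒰, x ∈ U) ∧
        (𝒰.Pairwise fun U V => Disjoint U V) ∧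
        (∀ U ∈ 𝒰, ∀ x ∈ U, ∀ y ∈ U, dist x y ≤ B) ∧
        (∀ U ∈ 𝒰, ∀ V ∈ 𝒰, U ≠ V → ∀ x ∈ U, ∀ y ∈ V, ((m : ℝ) + 1) < dist x y) :=
      fun m => hdim ((m : ℝ) + 1) (by positivity)
    choose B hBpos 𝒰 hcov hdisj hdiam hsep using H
    -- slow oscillation sets
    have H2 : ∀ m : ℕ, ∃ L : Set X, IsBounded L ∧
        ∀ x y : X, x ∉ L → y ∉ L → dist x y < B m + 1 → |f x - f y| < ε :=
      fun m => hf (B m + 1) ε (by linarith [hBpos m]) hε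
    choose L hLbd hL using H2
    set base : ℕ → Set X := fun m => L m ∪ closedBall x₀ m with hbase
    have hbasebd : ∀ m, IsBounded (base m) :=
      fun m => (hLbd m).union isBounded_closedBall
    set K : ℕ → Set X := fun m =>
      {y | ∃ U, U ∈ 𝒰 m ∧ y ∈ U ∧ (U ∩ base m).Nonempty} with hKdef
    have hKbd : ∀ m, IsBounded (K m) := by
      intro m
      obtain ⟨R, hR⟩ := (hbasebd m).subset_closedBall x₀
      refine (isBounded_closedBall (x := x₀) (r := B m + R)).subset ?_
      rintro y ⟨U, hU, hyU, z, hzU, hzb⟩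
      have h1 : dist y z ≤ B m := hdiam m U hU y hyU z hzU
      have h2 : dist z x₀ ≤ R := hR hzb
      calc dist y x₀ ≤ dist y z + dist z x₀ := dist_triangle y z x₀
        _ ≤ B m + R := by linarith
    have hbaseK : ∀ m, base m ⊆ K m := by
      intro m z hz
      obtain ⟨U, hU, hzU⟩ := hcov m z
      exact ⟨U, hU, hzU, z, hzU, hz⟩
    refine ⟨fun m => (K m, m + 1), ⟨fun m => hKbd m, ?_⟩, ?_⟩
    · -- glacial scale
      intro Q r hQ hr
      obtain ⟨R, hR⟩ := hQ.subset_closedBall x₀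
      refine ⟨max ⌈R⌉₊ ⌈r⌉₊, ?_, ?_⟩
      · refine fun z hz => hbaseK _ (Or.inr ?_)
        have : dist z x₀ ≤ R := hR hz
        have hR' : R ≤ ((max ⌈R⌉₊ ⌈r⌉₊ : ℕ) : ℝ) := by
          calc R ≤ (⌈R⌉₊ : ℝ) := Nat.le_ceil R
            _ ≤ _ := by exact_mod_cast Nat.le_max_left _ _
        exact mem_closedBall.2 (le_trans this hR')
      · calc r ≤ (⌈r⌉₊ : ℝ) := Nat.le_ceil r
          _ ≤ ((max ⌈R⌉₊ ⌈r⌉₊ : ℕ) : ℝ) := by exact_mod_cast Nat.le_max_right _ _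
          _ < ((max ⌈R⌉₊ ⌈r⌉₊ + 1 : ℕ) : ℝ) := by push_cast; linarith
    · -- chains
      intro n x hx
      rcases Nat.eq_zero_or_pos n with hn | hn
      · subst hn
        simp [Fin.last, hε]
      · choose m hm1 hm2 hm3 using hx
        obtain ⟨i₀, hi₀⟩ : ∃ i : Fin n, True := ⟨⟨0, hn⟩, trivial⟩
        set M : ℕ := Finset.univ.sup m with hM
        have hle : ∀ i : Fin n, m i ≤ M := fun i => Finset.le_sup (Finset.mem_univ i)
        obtain ⟨istar, -, histar⟩ := Finset.exists_mem_eq_sup Finset.univ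
          ⟨i₀, Finset.mem_univ i₀⟩ m
        -- the piece containing x 0
        obtain ⟨U₀, hU₀, hx0U₀⟩ := hcov M (x 0)
        -- every chain point lies in U₀
        have key : ∀ j : ℕ, ∀ hj : j < n + 1, x ⟨j, hj⟩ ∈ U₀ := by
          intro j
          induction j with
          | zero => intro hj; exact hx0U₀
          | succ j ih =>
            intro hj
            have hjn : j < n := Nat.lt_of_succ_lt_succ hj
            have hprev : x ⟨j, Nat.lt_succ_of_lt hjn⟩ ∈ U₀ := ih _
            set i : Fin n := ⟨j, hjn⟩ with hi
            have hcs : i.castSucc = ⟨j, Nat.lt_succ_of_lt hjn⟩ := rfl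
            have hsc : i.succ = ⟨j + 1, hj⟩ := rfl
            obtain ⟨V, hV, hxsV⟩ := hcov M (x i.succ)
            rcases eq_or_ne V U₀ with hVU | hVU
            · rw [← hsc]; rw [← hVU]; exact hxsV
            · exfalso
              have hd := hm3 i
              have hd' : dist (x i.castSucc) (x i.succ) ≤ (M : ℝ) + 1 := by
                refine le_trans hd ?_
                have : ((m i + 1 : ℕ) : ℝ) ≤ ((M + 1 : ℕ) : ℝ) := by
                  exact_mod_cast Nat.succ_le_succ (hle i)
                simpa using this
              have hgt := hsep M U₀ hU₀ V hV (Ne.symm hVU)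
                (x i.castSucc) (by rw [hcs]; exact hprev) (x i.succ) hxsV
              linarith
        -- the piece U₀ misses base M
        have hU₀base : U₀ ∩ base M = ∅ := by
          by_contra h
          obtain ⟨z, hz⟩ := nonempty_iff_ne_empty.2 h
          have hmem : x istar.castSucc ∈ K M := by
            refine ⟨U₀, hU₀, ?_, z, hz⟩
            have := key istar.castSucc.1 istar.castSucc.2
            exact this
          have h1 := hm1 istar
          rw [hM, histar] at hmem
          exact h1 hmem
        have hnotL : ∀ j : ℕ, ∀ hj : j < n + 1, x ⟨j, hj⟩ ∉ L M := by
          intro j hj hmem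
          have : x ⟨j, hj⟩ ∈ U₀ ∩ base M := ⟨key j hj, Or.inl hmem⟩
          rw [hU₀base] at this
          exact this
        have h0 : x 0 ∉ L M := by
          have := hnotL 0 (Nat.succ_pos n)
          simpa using this
        have hlast : x (Fin.last n) ∉ L M := hnotL n (Nat.lt_succ_self n)
        have hdist : dist (x 0) (x (Fin.last n)) < B M + 1 := by
          have h1 : x (Fin.last n) ∈ U₀ := key n (Nat.lt_succ_self n)
          have := hdiam M U₀ hU₀ (x 0) hx0U₀ (x (Fin.last n)) h1
          linarith
        exact hL M (x 0) (x (Fin.last n)) h0 hlast hdist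
end

section
/- Given a subset A of a metric space X, the following conditions are equivalent: (1) the characteristic function χ_A of A is glacially oscillating; (2) A is coarsely clopen; (3) there is a glacial scale S with the property that any S-chain starting at a point of A is completely contained in A. -/
open Metric Bornology Set

/-- A subset `A` of a metric space `X` is coarsely clopen if its characteristic function
is slowly oscillating. -/
def CoarselyClopen {X : Type*} [MetricSpace X] (A : Set X) : Prop :=
  SlowlyOscillating (A.indicator fun _ => (1 : ℝ))

lemma indicator_mem_iff_of_abs_lt_one {X : Type*} {A : Set X} {x y : X}
    (h : |A.indicator (fun _ => (1 : ℝ)) x - A.indicator (fun _ => (1 : ℝ)) y| < 1) :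
    x ∈ A ↔ y ∈ A := by
  by_cases hx : x ∈ A <;> by_cases hy : y ∈ A <;>
    simp_all [Set.indicator_apply]

lemma isSChain_rev {X : Type*} [MetricSpace X] {S : ℕ → Set X × ℕ} {n : ℕ}
    {x : Fin (n + 1) → X} (h : IsSChain S x) : IsSChain S (fun i => x i.rev) := by
  intro i
  obtain ⟨m, h1, h2, h3⟩ := h i.rev
  refine ⟨m, ?_, ?_, ?_⟩
  · simpa [Fin.rev_castSucc] using h2
  · simpa [Fin.rev_succ] using h1
  · rw [dist_comm] at h3
    simpa [Fin.rev_castSucc, Fin.rev_succ] using h3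

/-- Proposition 3.11: for a subset `A` of a metric space, the following are equivalent:
(1) the characteristic function of `A` is glacially oscillating; (2) `A` is coarsely
clopen; (3) there is a glacial scale `S` such that any `S`-chain starting in `A` stays
in `A`. -/
theorem coarselyClopen_tfae
    {X : Type*} [MetricSpace X] (A : Set X) :
    (GlaciallyOscillating (A.indicator fun _ => (1 : ℝ)) ↔ CoarselyClopen A) ∧
    (CoarselyClopen A ↔ ∃ S : ℕ → Set X × ℕ, IsGlacialScale S ∧
      ∀ (n : ℕ) (x : Fin (n + 1) → X), IsSChain S x → x 0 ∈ A → ∀ i, x i ∈ A) := by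
  have h12 : GlaciallyOscillating (A.indicator fun _ => (1 : ℝ)) → CoarselyClopen A := by
    intro hGO r ε hr hε
    obtain ⟨S, hS, hchain⟩ := hGO ε hε
    obtain ⟨i, -, hi⟩ := hS.2 ∅ r isBounded_empty hr
    refine ⟨(S i).1, hS.1 i, fun x y hx hy hd => ?_⟩
    have hc : IsSChain S ![x, y] := by
      intro j
      fin_cases j
      exact ⟨i, by simpa using hx, by simpa using hy, by simp; linarith⟩
    simpa using hchain 1 ![x, y] hc
  have h23 : CoarselyClopen A → ∃ S : ℕ → Set X × ℕ, IsGlacialScale S ∧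
      ∀ (n : ℕ) (x : Fin (n + 1) → X), IsSChain S x → x 0 ∈ A → ∀ i, x i ∈ A := by
    intro hCC
    by_cases hne : Nonempty X
    · obtain ⟨x₀⟩ := hne
      choose K' hKb hK using fun m : ℕ =>
        hCC (m + 1) (1 / 2) (by positivity) (by norm_num)
      refine ⟨fun m => (K' m ∪ closedBall x₀ m, m), ⟨fun i => (hKb i).union
        isBounded_closedBall, ?_⟩, ?_⟩
      · intro K r hK' hr
        obtain ⟨R, hR⟩ := hK'.subset_closedBall x₀
        obtain ⟨m, hm⟩ := exists_nat_gt (max R r)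
        refine ⟨m, subset_union_of_subset_right
          (hR.trans (closedBall_subset_closedBall ((le_max_left R r).trans hm.le))) _, ?_⟩
        exact lt_of_le_of_lt (le_max_right R r) hm
      · intro n x hx hx0 i
        induction i using Fin.induction with
        | zero => exact hx0
        | succ j ih =>
          obtain ⟨m, h1, h2, h3⟩ := hx j
          have hlt : dist (x j.castSucc) (x j.succ) < (m : ℝ) + 1 := by
            push_cast at h3 ⊢; linarith
          have := hK m (x j.castSucc) (x j.succ)
            (fun h => h1 (Or.inl h)) (fun h => h2 (Or.inl h)) (by exact_mod_cast hlt)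
          exact (indicator_mem_iff_of_abs_lt_one (by linarith)).mp ih
    · refine ⟨fun m => (∅, m), ⟨fun _ => isBounded_empty, ?_⟩, ?_⟩
      · intro K r _ hr
        obtain ⟨m, hm⟩ := exists_nat_gt r
        haveI : IsEmpty X := not_nonempty_iff.mp hne
        exact ⟨m, (Set.eq_empty_of_isEmpty K).subset, hm⟩
      · intro n x _ _ _
        exact ((not_nonempty_iff.mp hne).false (x 0)).elim
  have h31 : (∃ S : ℕ → Set X × ℕ, IsGlacialScale S ∧
      ∀ (n : ℕ) (x : Fin (n + 1) → X), IsSChain S x → x 0 ∈ A → ∀ i, x i ∈ A) →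
      GlaciallyOscillating (A.indicator fun _ => (1 : ℝ)) := by
    rintro ⟨S, hS, hA⟩ ε hε
    refine ⟨S, hS, fun n x hx => ?_⟩
    have h1 : x 0 ∈ A ↔ x (Fin.last n) ∈ A := by
      constructor
      · exact fun h => hA n x hx h (Fin.last n)
      · intro h
        have := hA n (fun i => x i.rev) (isSChain_rev hx)
          (by simpa [Fin.rev_zero] using h) (Fin.last n)
        simpa [Fin.rev_last] using this
    have : A.indicator (fun _ => (1 : ℝ)) (x 0) =
        A.indicator (fun _ => (1 : ℝ)) (x (Fin.last n)) := by
      by_cases h : x 0 ∈ A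
      · simp [h, h1.mp h]
      · simp [h, Set.indicator_of_notMem (fun hh => h (h1.mpr hh))]
    rw [this, sub_self, abs_zero]
    exact hε
  exact ⟨⟨h12, fun h => h31 (h23 h)⟩, ⟨h23, fun h => h12 (h31 h)⟩⟩
end

section
/- Given finitely many coarsely clopen subsets A_1, …, A_n of a metric space X, there is a single glacial scale S with the property that, for each j ≤ n, any S-chain starting at a point of A_j is completely contained in A_j. -/
open Metric Bornology Set

/-- Corollary 3.12: for finitely many coarsely clopen sets there is a single glacial
scale `S` such that any `S`-chain starting in some `A j` stays in `A j`. -/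
theorem exists_glacialScale_of_finitely_many_coarselyClopen
    {X : Type*} [MetricSpace X] (n : ℕ) (A : Fin n → Set X)
    (hA : ∀ j, CoarselyClopen (A j)) :
    ∃ S : ℕ → Set X × ℕ, IsGlacialScale S ∧
      ∀ j, ∀ (k : ℕ) (x : Fin (k + 1) → X), IsSChain S x → x 0 ∈ A j → ∀ i, x i ∈ A j := by
  classical
  rcases isEmpty_or_nonempty X with hX | hX
  · refine ⟨fun m => (∅, m + 1), ⟨fun i => isBounded_empty, ?_⟩, ?_⟩
    · intro K r hK hr
      obtain ⟨i, hi⟩ := exists_nat_gt r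
      refine ⟨i, by simp [Set.eq_empty_of_isEmpty K], ?_⟩
      push_cast
      linarith
    · intro j k x _ h0
      exact (hX.false (x 0)).elim
  · obtain ⟨x₀⟩ := hX
    choose Kb hKb hKb2 using fun (j : Fin n) (m : ℕ) => hA j ((m : ℝ) + 2) (1/2) (by positivity) (by norm_num)
    set S : ℕ → Set X × ℕ := fun m => ((⋃ j, Kb j m) ∪ Metric.closedBall x₀ m, m + 1) with hS
    have hmem : ∀ (m : ℕ) (a b : X), a ∉ (S m).1 → b ∉ (S m).1 →
        dist a b ≤ ((S m).2 : ℝ) → ∀ j, (a ∈ A j ↔ b ∈ A j) := by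
      intro m a b ha hb hd j
      have ha' : a ∉ Kb j m := fun h => ha (Or.inl (Set.mem_iUnion.mpr ⟨j, h⟩))
      have hb' : b ∉ Kb j m := fun h => hb (Or.inl (Set.mem_iUnion.mpr ⟨j, h⟩))
      have hd' : dist a b < (m : ℝ) + 2 := by
        have : ((S m).2 : ℝ) = (m : ℝ) + 1 := by simp [hS]
        linarith [hd.trans_eq this]
      have key := hKb2 j m a b ha' hb' hd'
      constructor <;> intro h <;> by_contra h'
      · simp [Set.indicator_of_mem h, Set.indicator_of_notMem h'] at key
        norm_num at key
      · simp [Set.indicator_of_notMem h', Set.indicator_of_mem h] at key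
        norm_num at key
    refine ⟨S, ⟨?_, ?_⟩, ?_⟩
    · intro m
      exact ((isBounded_iUnion.mpr fun j => hKb j m).union isBounded_closedBall)
    · intro K r hK hr
      obtain ⟨R, hR⟩ := hK.subset_closedBall x₀
      obtain ⟨m, hm⟩ := exists_nat_gt (max R r)
      refine ⟨m, hR.trans (subset_union_of_subset_right
        (Metric.closedBall_subset_closedBall (le_of_lt (lt_of_le_of_lt (le_max_left _ _) hm))) _), ?_⟩
      have : r < (m : ℝ) := lt_of_le_of_lt (le_max_right _ _) hm
      show r < ((m + 1 : ℕ) : ℝ)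
      push_cast
      linarith
    · intro j k x hchain h0
      intro i
      induction i using Fin.induction with
      | zero => exact h0
      | succ i ih =>
        obtain ⟨m, h1, h2, hd⟩ := hchain i
        exact (hmem m _ _ h1 h2 hd j).mp ih
end

section
/- If (X, d) is a metric space, then any slowly oscillating function f : X → ℝ whose image is finite is glacially oscillating. -/
open Metric Bornology Set

/-- Corollary 3.13: a slowly oscillating function with finite image is glacially
oscillating. -/
theorem glaciallyOscillating_of_finite_image
    {X : Type*} [MetricSpace X] (f : X → ℝ)
    (hf : SlowlyOscillating f) (hfin : (Set.range f).Finite) :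
    GlaciallyOscillating f := by
  classical
  intro ε hε
  -- get a separation δ for the finite range
  obtain ⟨δ, hδ0, hδ⟩ : ∃ δ : ℝ, 0 < δ ∧
      ∀ u ∈ Set.range f, ∀ v ∈ Set.range f, |u - v| < δ → u = v := by
    set s := hfin.toFinset with hs
    set T := ((s ×ˢ s).filter (fun p => p.1 ≠ p.2)).image (fun p => |p.1 - p.2|) with hT
    by_cases hTne : T.Nonempty
    · refine ⟨T.min' hTne, ?_, ?_⟩
      · have hmem := T.min'_mem hTne
        simp only [hT, Finset.mem_image, Finset.mem_filter] at hmem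
        obtain ⟨⟨a, b⟩, ⟨_, hne⟩, heq⟩ := hmem
        rw [← heq]
        exact abs_pos.2 (sub_ne_zero.2 hne)
      · intro u hu v hv h
        by_contra hne
        have hmem : |u - v| ∈ T := by
          simp only [hT, Finset.mem_image, Finset.mem_filter]
          exact ⟨(u, v), ⟨Finset.mem_product.2 ⟨hfin.mem_toFinset.2 hu, hfin.mem_toFinset.2 hv⟩, hne⟩, rfl⟩
        exact absurd h (not_lt.2 (T.min'_le _ hmem))
    · refine ⟨1, one_pos, fun u hu v hv _ => ?_⟩
      by_contra hne
      exact hTne ⟨|u - v|, by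
        simp only [hT, Finset.mem_image, Finset.mem_filter]
        exact ⟨(u, v), ⟨Finset.mem_product.2 ⟨hfin.mem_toFinset.2 hu, hfin.mem_toFinset.2 hv⟩, hne⟩, rfl⟩⟩
  by_cases hX : Nonempty X
  · obtain ⟨x0⟩ := hX
    choose K hKb hK using fun m : ℕ => hf ((m : ℝ) + 1) δ (by positivity) hδ0
    refine ⟨fun m => (K m ∪ Metric.closedBall x0 m, m), ⟨?_, ?_⟩, ?_⟩
    · intro i
      exact (hKb i).union isBounded_closedBall
    · intro B r hB hr
      obtain ⟨R, hR⟩ := hB.subset_closedBall x0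
      obtain ⟨m, hm⟩ := exists_nat_gt (max R r)
      refine ⟨m, ?_, lt_of_le_of_lt (le_max_right R r) hm⟩
      exact hR.trans ((Metric.closedBall_subset_closedBall
        ((le_max_left R r).trans hm.le)).trans Set.subset_union_right)
    · intro n x hx
      have key : ∀ i : Fin (n + 1), f (x i) = f (x 0) := by
        intro i
        induction i using Fin.induction with
        | zero => rfl
        | succ i ih =>
          obtain ⟨m, h1, h2, h3⟩ := hx i
          have h1' : x i.castSucc ∉ K m := fun h => h1 (Set.mem_union_left _ h)
          have h2' : x i.succ ∉ K m := fun h => h2 (Set.mem_union_left _ h)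
          have hd : dist (x i.castSucc) (x i.succ) < (m : ℝ) + 1 :=
            lt_of_le_of_lt h3 (by norm_num)
          have := hK m _ _ h1' h2' hd
          have heq := hδ _ ⟨_, rfl⟩ _ ⟨_, rfl⟩ this
          rw [← heq]
          exact ih
      rw [key (Fin.last n)]
      simpa using hε
  · refine ⟨fun m => (∅, m), ⟨fun i => isBounded_empty, ?_⟩, ?_⟩
    · intro B r hB hr
      obtain ⟨m, hm⟩ := exists_nat_gt r
      refine ⟨m, ?_, hm⟩
      intro b hb
      exact absurd ⟨b⟩ hX
    · intro n x _
      exact absurd ⟨x 0⟩ hX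
end

section
/- If X is a nonempty geodesic metric space and f : X → ℝ, then the following conditions are equivalent: (1) f is glacially oscillating; (2) for each ε > 0 there is a bounded subset K of X such that for every connected component C of X \ K the diameter of f(C) is at most ε. -/
open Metric Bornology Set

private lemma chain_of_reflTransGen {X : Type*} [MetricSpace X] {C : Set X} {δ : ℝ}
    {a b : X} (ha : a ∈ C)
    (hab : Relation.ReflTransGen (fun y w => w ∈ C ∧ dist y w < δ) a b) :
    ∃ (n : ℕ) (z : Fin (n + 1) → X), z 0 = a ∧ z (Fin.last n) = b ∧
      (∀ i, z i ∈ C) ∧ ∀ i : Fin n, dist (z i.castSucc) (z i.succ) ≤ δ := by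
  induction hab with
  | refl => exact ⟨0, fun _ => a, rfl, rfl, fun _ => ha, fun i => i.elim0⟩
  | @tail c d h₁ h₂ ih =>
    obtain ⟨n, z, hz0, hzl, hzm, hzd⟩ := ih
    refine ⟨n + 1, Fin.snoc z d, ?_, ?_, ?_, ?_⟩
    · rw [show (0 : Fin (n+2)) = (0 : Fin (n+1)).castSucc by simp, Fin.snoc_castSucc, hz0]
    · simp [Fin.snoc_last]
    · intro i
      refine Fin.lastCases ?_ ?_ i
      · rw [Fin.snoc_last]; exact h₂.1
      · intro j; rw [Fin.snoc_castSucc]; exact hzm j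
    · intro i
      refine Fin.lastCases ?_ ?_ i
      · rw [Fin.succ_last, Fin.snoc_last, Fin.snoc_castSucc, hzl]
        exact le_of_lt h₂.2
      · intro j
        rw [Fin.succ_castSucc, Fin.snoc_castSucc, Fin.snoc_castSucc]
        exact hzd j

private lemma reflTransGen_of_preconnected {X : Type*} [MetricSpace X] {C : Set X}
    (hC : IsPreconnected C) {a b : X} (ha : a ∈ C) (hb : b ∈ C) {δ : ℝ} (hδ : 0 < δ) :
    Relation.ReflTransGen (fun y w => w ∈ C ∧ dist y w < δ) a b := by
  by_contra hcon
  set R := fun y w : X => w ∈ C ∧ dist y w < δ with hR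
  set U := {y : X | Relation.ReflTransGen R a y} with hU
  have key := hC (⋃ y ∈ C ∩ U, ball y δ) (⋃ y ∈ C \ U, ball y δ)
    (isOpen_biUnion fun _ _ => isOpen_ball) (isOpen_biUnion fun _ _ => isOpen_ball)
    (fun c hc => by
      by_cases hcU : c ∈ U
      · exact Or.inl (mem_biUnion ⟨hc, hcU⟩ (mem_ball_self hδ))
      · exact Or.inr (mem_biUnion ⟨hc, hcU⟩ (mem_ball_self hδ)))
    ⟨a, ha, mem_biUnion ⟨ha, Relation.ReflTransGen.refl⟩ (mem_ball_self hδ)⟩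
    ⟨b, hb, mem_biUnion ⟨hb, hcon⟩ (mem_ball_self hδ)⟩
  obtain ⟨z, hzC, hz1, hz2⟩ := key
  simp only [mem_iUnion, exists_prop] at hz1 hz2
  obtain ⟨y, ⟨hyC, hyU⟩, hzy⟩ := hz1
  obtain ⟨y', ⟨hy'C, hy'U⟩, hzy'⟩ := hz2
  refine hy'U ?_
  refine Relation.ReflTransGen.tail (Relation.ReflTransGen.tail hyU ⟨hzC, ?_⟩) ⟨hy'C, ?_⟩
  · rw [dist_comm]; exact mem_ball.mp hzy
  · exact mem_ball.mp hzy'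

/-- Proposition 3.14: for a geodesic space `X` and `f : X → ℝ`, `f` is glacially
oscillating iff for each `ε > 0` there is a bounded set `K` such that `f` varies by at
most `ε` on every connected component of `X \ K`. -/
theorem glaciallyOscillating_iff_components_of_geodesic
    {X : Type*} [MetricSpace X] [Nonempty X]
    (hgeo : ∀ x y : X, ∃ γ : ℝ → X, γ 0 = x ∧ γ (dist x y) = y ∧
      ∀ s ∈ Set.Icc (0 : ℝ) (dist x y), ∀ t ∈ Set.Icc (0 : ℝ) (dist x y),
        dist (γ s) (γ t) = |s - t|)
    (f : X → ℝ) :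
    GlaciallyOscillating f ↔
      ∀ ε : ℝ, 0 < ε → ∃ K : Set X, IsBounded K ∧
        ∀ x : X, x ∉ K → ∀ a ∈ connectedComponentIn Kᶜ x, ∀ b ∈ connectedComponentIn Kᶜ x,
          |f a - f b| ≤ ε := by
  constructor
  · intro hf ε hε
    obtain ⟨S, ⟨hSb, hSd⟩, hchain⟩ := hf ε hε
    obtain ⟨i₀, -, hi₀⟩ := hSd ∅ 1 isBounded_empty one_pos
    refine ⟨(S i₀).1, hSb i₀, ?_⟩
    intro x hx a ha b hb
    have hC : IsPreconnected (connectedComponentIn ((S i₀).1)ᶜ x) :=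
      isPreconnected_connectedComponentIn
    have hsub := connectedComponentIn_subset ((S i₀).1)ᶜ x
    have hrt := reflTransGen_of_preconnected hC ha hb one_pos
    obtain ⟨n, z, hz0, hzl, hzm, hzd⟩ := chain_of_reflTransGen ha hrt
    have hsc : IsSChain S z := fun i =>
      ⟨i₀, hsub (hzm _), hsub (hzm _), (hzd i).trans (le_of_lt hi₀)⟩
    have := hchain n z hsc
    rw [hz0, hzl] at this
    exact this.le
  · intro h ε hε
    obtain ⟨K, hKb, hK⟩ := h (ε/2) (by positivity)
    obtain ⟨x₀⟩ := ‹Nonempty X›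
    obtain ⟨R₀, hR₀⟩ := hKb.subset_closedBall x₀
    set R := max R₀ 0 with hRdef
    have hKR : K ⊆ closedBall x₀ R := hR₀.trans (closedBall_subset_closedBall (le_max_left _ _))
    have hR0 : (0:ℝ) ≤ R := le_max_right _ _
    refine ⟨fun i => (closedBall x₀ (R + i + 1), i + 1), ⟨fun i => isBounded_closedBall, ?_⟩, ?_⟩
    · intro K' r hK' hr
      obtain ⟨R', hR'⟩ := hK'.subset_closedBall x₀
      refine ⟨⌈max R' r⌉₊, ?_, ?_⟩
      · refine hR'.trans (closedBall_subset_closedBall ?_)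
        have h1 : R' ≤ (⌈max R' r⌉₊ : ℝ) := (le_max_left _ _).trans (Nat.le_ceil _)
        linarith
      · have h1 : r ≤ (⌈max R' r⌉₊ : ℝ) := (le_max_right _ _).trans (Nat.le_ceil _)
        push_cast
        linarith
    · intro n x hx
      rcases Nat.eq_zero_or_pos n with hn | hn
      · subst hn
        simpa [Fin.last] using hε
      -- each step stays in the same component of Kᶜ
      have step : ∀ i : Fin n, x i.castSucc ∉ K ∧ x i.succ ∉ K ∧
          x i.succ ∈ connectedComponentIn Kᶜ (x i.castSucc) := by
        intro i
        obtain ⟨m, h1, h2, h3⟩ := hx i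
        simp only at h1 h2 h3
        have hd1 : R + m + 1 < dist (x i.castSucc) x₀ := by
          by_contra hcon
          exact h1 (mem_closedBall.mpr (le_of_not_gt hcon))
        obtain ⟨γ, hγ0, hγd, hγiso⟩ := hgeo (x i.castSucc) (x i.succ)
        set d := dist (x i.castSucc) (x i.succ) with hd
        have hd0 : 0 ≤ d := dist_nonneg
        have hcont : ContinuousOn γ (Icc 0 d) := by
          refine (LipschitzOnWith.of_dist_le_mul ?_ (K := 1)).continuousOn
          intro s hs t ht
          rw [hγiso s hs t ht, Real.dist_eq]
          simp
        have hΓpre : IsPreconnected (γ '' Icc 0 d) :=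
          isPreconnected_Icc.image γ hcont
        have hΓK : γ '' Icc 0 d ⊆ Kᶜ := by
          rintro _ ⟨t, ht, rfl⟩
          intro hmem
          have h4 : dist (γ t) (x i.castSucc) = t := by
            rw [← hγ0]
            rw [hγiso t ht 0 ⟨le_refl 0, hd0⟩]
            rw [sub_zero, abs_of_nonneg ht.1]
          have h5 : dist (γ t) x₀ ≤ R := mem_closedBall.mp (hKR hmem)
          have h6 : dist (x i.castSucc) x₀ ≤ dist (x i.castSucc) (γ t) + dist (γ t) x₀ :=
            dist_triangle _ _ _
          rw [dist_comm (x i.castSucc) (γ t), h4] at h6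
          have h7 : t ≤ d := ht.2
          have h3' : d ≤ (m:ℝ) + 1 := by exact_mod_cast h3
          linarith [h3', hd1, h5, h6, h7]
        have hmem0 : x i.castSucc ∈ γ '' Icc 0 d := ⟨0, ⟨le_refl 0, hd0⟩, hγ0⟩
        have hmemd : x i.succ ∈ γ '' Icc 0 d := ⟨d, ⟨hd0, le_refl d⟩, hγd⟩
        have hsub := hΓpre.subset_connectedComponentIn hmem0 hΓK
        exact ⟨hΓK hmem0, hΓK hmemd, hsub hmemd⟩
      have hx0K : x 0 ∉ K := by
        have := (step ⟨0, hn⟩).1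
        simpa using this
      have comp : ∀ i : Fin (n+1), x i ∈ connectedComponentIn Kᶜ (x 0) := by
        intro i
        induction i using Fin.induction with
        | zero => exact mem_connectedComponentIn hx0K
        | succ j ih =>
          have heq := connectedComponentIn_eq ih
          rw [← heq] at *
          have := (step j).2.2
          rw [connectedComponentIn_eq ih] at *
          exact (connectedComponentIn_eq ih) ▸ (step j).2.2
      have := hK (x 0) hx0K (x 0) (mem_connectedComponentIn hx0K) (x (Fin.last n)) (comp _)
      linarith [this]
end

section
/- Let G be a countable group equipped with a proper left-invariant metric d. A subset A of G is coarsely clopen if and only if it is almost invariant. -/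
open Metric Bornology Set

/-- A subset `A` of a group `G` is almost invariant if `A Δ (A·g)` is finite for every
`g : G`. -/
def AlmostInvariant {G : Type*} [Group G] (A : Set G) : Prop :=
  ∀ g : G, (symmDiff A ((fun a => a * g) '' A)).Finite


lemma indicator_mem_iff_of_abs_lt {X : Type*} (A : Set X) (a b : X)
    (h : |A.indicator (fun _ => (1:ℝ)) a - A.indicator (fun _ => (1:ℝ)) b| < 1/2) :
    a ∈ A ↔ b ∈ A := by
  by_cases ha : a ∈ A <;> by_cases hb : b ∈ A <;>
    simp_all [Set.indicator_apply, ha, hb, abs_of_nonneg] <;> norm_num at h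

/-- Observation 5.2: for a countable group with a proper left-invariant metric, a subset
is coarsely clopen iff it is almost invariant. -/
theorem coarselyClopen_iff_almostInvariant
    {G : Type*} [Group G] [Countable G] [MetricSpace G]
    (hleft : ∀ g h₁ h₂ : G, dist (g * h₁) (g * h₂) = dist h₁ h₂)
    (hproper : ∀ K : Set G, IsBounded K → K.Finite)
    (A : Set G) :
    CoarselyClopen A ↔ AlmostInvariant A := by
  constructor
  · intro h g
    obtain ⟨K, hK, hKspec⟩ := h (dist (1:G) g + 1) (1/2) (by positivity) (by norm_num)
    have hKfin := hproper K hK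
    refine Set.Finite.subset (hKfin.union (hKfin.image (fun a => a * g))) ?_
    intro z hz
    by_contra hzn
    simp only [Set.mem_union, not_or, Set.mem_image, not_exists, not_and] at hzn
    obtain ⟨hz1, hz2⟩ := hzn
    have hzg : z * g⁻¹ ∉ K := fun hc => hz2 _ hc (by group)
    have hdist : dist (z * g⁻¹) z < dist (1:G) g + 1 := by
      have : dist (z * g⁻¹ * 1) (z * g⁻¹ * g) = dist (1:G) g := hleft _ _ _
      simp only [mul_one] at this
      rw [show z * g⁻¹ * g = z by group] at this
      rw [this]; linarith
    have := indicator_mem_iff_of_abs_lt A _ _ (hKspec _ _ hzg hz1 hdist)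
    rw [Set.mem_symmDiff] at hz
    have himg : z ∈ (fun a => a * g) '' A ↔ z * g⁻¹ ∈ A := by
      constructor
      · rintro ⟨a, ha, rfl⟩; simpa using ha
      · intro ha; exact ⟨z * g⁻¹, ha, by group⟩
    tauto
  · intro h r ε hr hε
    have hFfin : (Metric.ball (1:G) r).Finite := hproper _ Metric.isBounded_ball
    set K : Set G := ⋃ g ∈ Metric.ball (1:G) r, symmDiff A ((fun a => a * g) '' A) with hKdef
    have hKfin : K.Finite := Set.Finite.biUnion hFfin (fun g _ => h g)
    refine ⟨K, hKfin.isBounded, ?_⟩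
    intro x y hx hy hxy
    have hg : x⁻¹ * y ∈ Metric.ball (1:G) r := by
      have : dist (x⁻¹ * x) (x⁻¹ * y) = dist x y := hleft _ _ _
      simp only [inv_mul_cancel] at this
      simpa [Metric.mem_ball, dist_comm] using lt_of_le_of_lt this.le hxy
    have hy' : y ∉ symmDiff A ((fun a => a * (x⁻¹ * y)) '' A) := by
      intro hc
      exact hy (Set.mem_biUnion hg hc)
    rw [Set.mem_symmDiff] at hy'
    push_neg at hy'
    have hiff : x ∈ A ↔ y ∈ A := by
      have himg : y ∈ (fun a => a * (x⁻¹ * y)) '' A ↔ x ∈ A := by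
        constructor
        · rintro ⟨a, ha, heq⟩
          have hax : a = x := mul_right_cancel (heq.trans (show y = x * (x⁻¹ * y) by group))
          rwa [← hax]
        · intro ha; exact ⟨x, ha, by group⟩
      tauto
    have heqind : A.indicator (fun _ => (1:ℝ)) x = A.indicator (fun _ => (1:ℝ)) y := by
      by_cases hxa : x ∈ A
      · simp [Set.indicator_apply, hxa, hiff.mp hxa]
      · simp [Set.indicator_apply, hxa, (not_iff_not.mpr hiff).mp hxa]
    rw [heqind]; simpa using hε
end

section
/- If G is an infinite, locally finite, countable group, then for every natural number n there exist n pairwise disjoint infinite almost invariant subsets of G (that is, G has infinitely many ends). -/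
open Set

/-- A group is locally finite if every finite subset is contained in a finite subgroup. -/
def LocallyFiniteGroup (G : Type*) [Group G] : Prop :=
  ∀ S : Set G, S.Finite → ∃ H : Subgroup G, S ⊆ (H : Set G) ∧ (H : Set G).Finite

/-- Proposition 5.6: an infinite locally finite countable group has infinitely many
ends: for every `n` there are `n` pairwise disjoint infinite almost invariant subsets. -/
theorem infinite_ends_of_locallyFinite
    {G : Type*} [Group G] [Countable G] [Infinite G]
    (hlf : LocallyFiniteGroup G) (n : ℕ) :
    ∃ A : Fin n → Set G, (∀ i, (A i).Infinite ∧ AlmostInvariant (A i)) ∧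
      Pairwise (Function.onFun Disjoint A) := by
  classical
  obtain ⟨e, he⟩ := exists_surjective_nat G
  -- a one-step extension of a finite subgroup
  have key : ∀ (k : ℕ) (K : Subgroup G), (K : Set G).Finite →
      ∃ K' : Subgroup G, (K' : Set G).Finite ∧ (K : Set G) ⊆ (K' : Set G) ∧ e k ∈ K' ∧
        ∃ x, x ∈ K' ∧ x ∉ K := by
    intro k K hK
    obtain ⟨x, hxx⟩ := hK.infinite_compl.nonempty
    obtain ⟨K', hK'sub, hK'fin⟩ :=
      hlf (insert x (insert (e k) (K : Set G)))
        (((hK.insert (e k)).insert x))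
    refine ⟨K', hK'fin, ?_, ?_, x, ?_, hxx⟩
    · exact fun y hy => hK'sub (by simp [hy])
    · exact hK'sub (by simp)
    · exact hK'sub (by simp)
  choose step hfin hsub hmem w hw1 hw2 using key
  -- build the chain of finite subgroups
  let F : ℕ → {K : Subgroup G // (K : Set G).Finite} :=
    fun k => Nat.rec ⟨⊥, by simp⟩ (fun k ih => ⟨step k ih.1 ih.2, hfin k ih.1 ih.2⟩) k
  have hFsucc : ∀ k, (F (k + 1)).1 = step k (F k).1 (F k).2 := fun _ => rfl
  set Hs : ℕ → Set G := fun k => ((F k).1 : Set G) with hHs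
  have hstep : ∀ k, Hs k ⊆ Hs (k + 1) := fun k => hsub k (F k).1 (F k).2
  have hmono : ∀ a b, a ≤ b → Hs a ⊆ Hs b := by
    intro a b hab
    induction b, hab using Nat.le_induction with
    | base => exact subset_rfl
    | succ b hab ih => exact ih.trans (hstep b)
  have hfinite : ∀ k, (Hs k).Finite := fun k => (F k).2
  -- the layers
  set L : ℕ → Set G := fun k => Hs (k + 1) \ Hs k with hL
  have hLne : ∀ k, (L k).Nonempty := fun k =>
    ⟨w k (F k).1 (F k).2, hw1 k (F k).1 (F k).2, hw2 k (F k).1 (F k).2⟩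
  have hLdisj : ∀ k m, k < m → Disjoint (L k) (L m) := by
    intro k m hkm
    rw [Set.disjoint_left]
    rintro x ⟨hx1, -⟩ ⟨-, hx2⟩
    exact hx2 (hmono (k + 1) m hkm hx1)
  have hLdisj' : ∀ k m, k ≠ m → Disjoint (L k) (L m) := by
    intro k m hkm
    rcases hkm.lt_or_gt with h | h
    · exact hLdisj k m h
    · exact (hLdisj m k h).symm
  -- the chain exhausts G
  have hcov : ∀ g : G, ∃ m, g ∈ Hs m := by
    intro g
    obtain ⟨m, rfl⟩ := he g
    exact ⟨m + 1, hmem m (F m).1 (F m).2⟩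
  -- layers are unions of left cosets: moving by later elements preserves them
  have hmove : ∀ m k, m ≤ k → ∀ g ∈ (F m).1, ∀ a ∈ L k, a * g ∈ L k := by
    intro m k hmk g hg a ha
    obtain ⟨ha1, ha2⟩ := ha
    have hgk : g ∈ (F k).1 := hmono m k hmk hg
    have hgk1 : g ∈ (F (k + 1)).1 := hmono m (k + 1) (hmk.trans (Nat.le_succ k)) hg
    refine ⟨mul_mem ha1 hgk1, fun h => ha2 ?_⟩
    have : a * g * g⁻¹ ∈ (F k).1 := mul_mem h (inv_mem hgk)
    have h' : a ∈ (F k).1 := by simpa [mul_assoc] using this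
    exact h'
  -- the sets
  refine ⟨fun i => ⋃ j : ℕ, L (j * n + i), fun i => ⟨?_, ?_⟩, ?_⟩
  · -- infinite
    have hpos : 0 < n := i.pos
    refine Set.infinite_of_injective_forall_mem
      (f := fun j : ℕ => (hLne (j * n + i)).choose) ?_ ?_
    · intro j j' hjj'
      by_contra hne
      have h1 := (hLne (j * n + i)).choose_spec
      have h2 := (hLne (j' * n + i)).choose_spec
      simp only at hjj'
      rw [hjj'] at h1
      have : (j * n + (i : ℕ)) ≠ j' * n + (i : ℕ) := by
        intro h
        have h' : j * n = j' * n := by omega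
        exact hne (Nat.eq_of_mul_eq_mul_right hpos h')
      exact (hLdisj' _ _ this).le_bot ⟨h1, h2⟩
    · intro j
      exact Set.mem_iUnion.2 ⟨j, (hLne (j * n + i)).choose_spec⟩
  · -- almost invariant
    intro g
    obtain ⟨m, hm⟩ := hcov g
    have hgm : g ∈ (F m).1 := hm
    apply Set.Finite.subset ((hfinite m).union ((hfinite m).image (fun a => a * g)))
    intro x hx
    rcases Set.mem_symmDiff.1 hx with ⟨hxA, hxB⟩ | ⟨hxB, hxA⟩
    · obtain ⟨j, hj⟩ := Set.mem_iUnion.1 hxA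
      by_cases h : m ≤ j * n + (i : ℕ)
      · exfalso
        apply hxB
        refine ⟨x * g⁻¹, Set.mem_iUnion.2 ⟨j, hmove m _ h g⁻¹ (inv_mem hgm) x hj⟩, ?_⟩
        simp
      · left
        exact hmono (j * n + i + 1) m (by omega) hj.1
    · obtain ⟨a, haA, rfl⟩ := hxB
      obtain ⟨j, hj⟩ := Set.mem_iUnion.1 haA
      by_cases h : m ≤ j * n + (i : ℕ)
      · exact absurd (Set.mem_iUnion.2 ⟨j, hmove m _ h g hgm a hj⟩) hxA
      · right
        exact ⟨a, hmono (j * n + i + 1) m (by omega) hj.1, rfl⟩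
  · -- pairwise disjoint
    intro i i' hii'
    simp only [Function.onFun, Set.disjoint_iUnion_left, Set.disjoint_iUnion_right]
    intro j j'
    apply hLdisj'
    have h1 : (i : ℕ) < n := i.isLt
    have h2 : (i' : ℕ) < n := i'.isLt
    intro h
    have hmod : (j' * n + (i : ℕ)) % n = (j * n + (i' : ℕ)) % n := by rw [h]
    rw [Nat.mul_add_mod', Nat.mul_add_mod', Nat.mod_eq_of_lt h1, Nat.mod_eq_of_lt h2] at hmod
    exact hii' (Fin.ext hmod)
end

section
/- Suppose a countable group G is the union of an increasing sequence {G_i}_{i≥1} of subgroups, none of which is locally finite. If A is an infinite almost invariant subset of G, then there is n ≥ 1 such that A ∩ G_n is infinite. -/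
open Set

/-- Proposition 5.7: if a countable group `G` is the union of an increasing sequence of
non-locally-finite subgroups `Gᵢ` and `A` is an infinite almost invariant subset of `G`,
then `A ∩ Gₙ` is infinite for some `n`. -/
theorem exists_infinite_inter_of_almostInvariant
    {G : Type*} [Group G] [Countable G]
    (Gi : ℕ → Subgroup G) (hmono : Monotone Gi) (hunion : ∀ g : G, ∃ n, g ∈ Gi n)
    (hnlf : ∀ n, ¬ LocallyFiniteGroup (Gi n))
    (A : Set G) (hAinf : A.Infinite) (hA : AlmostInvariant A) :
    ∃ n, (A ∩ (Gi n : Set G)).Infinite := by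
  classical
  -- Step 1: find a finite set `T ⊆ Gi 0` generating an infinite subgroup `H ≤ Gi 0`.
  obtain ⟨S, hSfin, hS⟩ :
      ∃ S : Set ↥(Gi 0), S.Finite ∧
        ∀ K : Subgroup ↥(Gi 0), S ⊆ (K : Set ↥(Gi 0)) → ¬ (K : Set ↥(Gi 0)).Finite := by
    have h := hnlf 0
    unfold LocallyFiniteGroup at h
    push_neg at h
    obtain ⟨S, hfin, h⟩ := h
    exact ⟨S, hfin, fun K hK hKfin => h K hK hKfin⟩
  set T : Set G := ((Gi 0).subtype) '' S with hTdef
  have hTfin : T.Finite := hSfin.image _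
  set H : Subgroup G := Subgroup.closure T with hHdef
  have hTsub : T ⊆ (Gi 0 : Set G) := by
    rintro x ⟨y, _, rfl⟩; exact y.2
  have hHle : H ≤ Gi 0 := (Subgroup.closure_le _).2 hTsub
  have hHinf : (H : Set G).Infinite := by
    have h1 : (Subgroup.closure S : Set ↥(Gi 0)).Infinite :=
      hS _ Subgroup.subset_closure
    have h2 : H = Subgroup.map (Gi 0).subtype (Subgroup.closure S) := by
      rw [MonoidHom.map_closure]
    rw [h2, Subgroup.coe_map]
    exact h1.image ((Gi 0).subtype_injective.injOn)
  have hTH : T ⊆ (H : Set G) := Subgroup.subset_closure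
  -- the fiber of the coset map containing `a` lies in some `Gi n`
  have key : (∃ a ∈ A,
      (A ∩ {x : G | (QuotientGroup.mk x : G ⧸ H) = QuotientGroup.mk a}).Infinite) →
      ∃ n, (A ∩ (Gi n : Set G)).Infinite := by
    rintro ⟨a, _, hinf⟩
    obtain ⟨m, hm⟩ := hunion a
    refine ⟨max m 0, hinf.mono ?_⟩
    rintro x ⟨hxA, hx⟩
    refine ⟨hxA, ?_⟩
    have hmem : a⁻¹ * x ∈ H := by
      have := QuotientGroup.eq.mp hx.symm
      exact this
    have h1 : a ∈ Gi (max m 0) := hmono (le_max_left m 0) hm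
    have h2 : a⁻¹ * x ∈ Gi (max m 0) := hmono (le_max_right m 0) (hHle hmem)
    have : a * (a⁻¹ * x) ∈ Gi (max m 0) := mul_mem h1 h2
    simpa using this
  by_cases hcase : ∃ a ∈ A,
      (A ∩ {x : G | (QuotientGroup.mk x : G ⧸ H) = QuotientGroup.mk a}).Infinite
  · exact key hcase
  push_neg at hcase
  -- every fiber meets A finitely, so A meets infinitely many cosets
  have himg : ((QuotientGroup.mk : G → G ⧸ H) '' A).Infinite := by
    intro hfin
    apply hAinf
    have : A ⊆ ⋃ c ∈ (QuotientGroup.mk : G → G ⧸ H) '' A,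
        A ∩ {x : G | (QuotientGroup.mk x : G ⧸ H) = c} := by
      intro x hx
      exact mem_biUnion (mem_image_of_mem _ hx) ⟨hx, rfl⟩
    refine Finite.subset (hfin.biUnion ?_) this
    rintro c ⟨a, haA, rfl⟩
    exact hcase a haA
  -- bad set
  set B : Set G := ⋃ s ∈ T,
      (symmDiff A ((fun a => a * s) '' A) ∪ symmDiff A ((fun a => a * s⁻¹) '' A)) with hBdef
  have hBfin : B.Finite := hTfin.biUnion (fun s _ => (hA s).union (hA s⁻¹))
  have hgood : (((QuotientGroup.mk : G → G ⧸ H) '' A) \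
      ((QuotientGroup.mk : G → G ⧸ H) '' B)).Nonempty :=
    ((himg.diff (hBfin.image _)).nonempty)
  obtain ⟨c, ⟨a, haA, rfl⟩, hcB⟩ := hgood
  set D : Set G := A ∩ {x : G | (QuotientGroup.mk x : G ⧸ H) = QuotientGroup.mk a} with hDdef
  -- on a good coset, D is invariant under right multiplication by generators and inverses
  have hstep : ∀ s ∈ T, ∀ x ∈ D, x * s ∈ D ∧ x * s⁻¹ ∈ D := by
    intro s hs x hx
    obtain ⟨hxA, hxc⟩ := hx
    have hsH : s ∈ H := hTH hs
    have hmk1 : (QuotientGroup.mk (x * s) : G ⧸ H) = QuotientGroup.mk a := by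
      rw [QuotientGroup.mk_mul_of_mem x hsH]; exact hxc
    have hmk2 : (QuotientGroup.mk (x * s⁻¹) : G ⧸ H) = QuotientGroup.mk a := by
      rw [QuotientGroup.mk_mul_of_mem x (inv_mem hsH)]; exact hxc
    have hnB : ∀ y : G, (QuotientGroup.mk y : G ⧸ H) = QuotientGroup.mk a → y ∉ B := by
      intro y hy hyB
      exact hcB ⟨y, hyB, hy⟩
    constructor
    · refine ⟨?_, hmk1⟩
      by_contra hxs
      apply hnB (x * s) hmk1
      have : x * s ∈ symmDiff A ((fun a => a * s) '' A) :=
        Or.inr ⟨⟨x, hxA, rfl⟩, hxs⟩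
      exact mem_biUnion hs (Or.inl this)
    · refine ⟨?_, hmk2⟩
      by_contra hxs
      apply hnB (x * s⁻¹) hmk2
      have : x * s⁻¹ ∈ symmDiff A ((fun a => a * s⁻¹) '' A) :=
        Or.inr ⟨⟨x, hxA, rfl⟩, hxs⟩
      exact mem_biUnion hs (Or.inr this)
  -- closure induction: D is invariant under right multiplication by all of H
  have hDinv : ∀ h ∈ H, ∀ x ∈ D, x * h ∈ D ∧ x * h⁻¹ ∈ D := by
    intro h hh
    refine Subgroup.closure_induction
      (p := fun g _ => ∀ x ∈ D, x * g ∈ D ∧ x * g⁻¹ ∈ D)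
      (fun s hs x hx => hstep s hs x hx)
      (fun x hx => by constructor <;> simpa using hx)
      ?_ ?_ hh
    · intro g₁ g₂ _ _ h1 h2 x hx
      constructor
      · have := (h2 (x * g₁) (h1 x hx).1).1
        rwa [mul_assoc] at this
      · have := (h1 (x * g₂⁻¹) (h2 x hx).2).2
        rw [mul_assoc] at this
        rwa [mul_inv_rev]
    · intro g _ h1 x hx
      refine ⟨(h1 x hx).2, ?_⟩
      simpa using (h1 x hx).1
  have haD : a ∈ D := ⟨haA, rfl⟩
  -- then a • H ⊆ D ⊆ A, giving an infinite intersection with some Gi n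
  apply key
  refine ⟨a, haA, Infinite.mono ?_ (hHinf.image (f := fun h => a * h)
    (mul_right_injective a).injOn)⟩
  rintro _ ⟨h, hh, rfl⟩
  exact (hDinv h hh a haD).1
end

section
/- Suppose a countable group G contains three pairwise disjoint NCC sets E₁, E₂, E₃. If G is not locally finite, then G acts trivially on at most one of E₁, E₂, E₃. -/
open Set

/-- An NCC set: an almost invariant set that is infinite with infinite complement. -/
def IsNCC {G : Type*} [Group G] (E : Set G) : Prop :=
  AlmostInvariant E ∧ E.Infinite ∧ Eᶜ.Infinite

/-- `G` acts trivially on `E` if `E Δ (g·E)` is finite for each `g : G`. -/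
def ActsTrivially {G : Type*} [Group G] (E : Set G) : Prop :=
  ∀ g : G, (symmDiff E ((fun a => g * a) '' E)).Finite


section WordLength

variable {G : Type*} [Group G]

/-- `n` is a length of `g` over the alphabet `T`. -/
def HasLen (T : Set G) (g : G) (n : ℕ) : Prop :=
  ∃ l : List G, (∀ x ∈ l, x ∈ T) ∧ l.length = n ∧ l.prod = g

/-- word length -/
noncomputable def wlen (T : Set G) (g : G) : ℕ := sInf {n | HasLen T g n}

lemma exists_hasLen {T : Set G} (hsymm : ∀ s ∈ T, s⁻¹ ∈ T)
    (htop : Subgroup.closure T = ⊤) (g : G) : ∃ n, HasLen T g n := by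
  have hg : g ∈ Subgroup.closure T := htop ▸ Subgroup.mem_top g
  have hg' : g ∈ Submonoid.closure (T ∪ T⁻¹) := by
    rw [← Subgroup.closure_toSubmonoid] at *
    exact hg
  obtain ⟨l, hl, hprod⟩ := Submonoid.exists_list_of_mem_closure hg'
  refine ⟨l.length, l, fun x hx => ?_, rfl, hprod⟩
  rcases hl x hx with h | h
  · exact h
  · have : x⁻¹ ∈ T := Set.mem_inv.mp h
    simpa using hsymm _ this

variable {T : Set G} (hsymm : ∀ s ∈ T, s⁻¹ ∈ T) (htop : Subgroup.closure T = ⊤)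

include hsymm htop

lemma wlen_spec (g : G) : HasLen T g (wlen T g) :=
  Nat.sInf_mem (exists_hasLen hsymm htop g)

omit hsymm htop in
lemma wlen_le {g : G} {n : ℕ} (h : HasLen T g n) : wlen T g ≤ n := Nat.sInf_le h

lemma wlen_mul_le (g h : G) : wlen T (g * h) ≤ wlen T g + wlen T h := by
  obtain ⟨l1, hm1, hl1, hp1⟩ := wlen_spec hsymm htop g
  obtain ⟨l2, hm2, hl2, hp2⟩ := wlen_spec hsymm htop h
  refine wlen_le ⟨l1 ++ l2, ?_, ?_, ?_⟩
  · intro x hx; rcases List.mem_append.mp hx with h | h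
    exacts [hm1 x h, hm2 x h]
  · simp [hl1, hl2]
  · simp [hp1, hp2]

lemma wlen_inv_le (g : G) : wlen T g⁻¹ ≤ wlen T g := by
  obtain ⟨l, hm, hl, hp⟩ := wlen_spec hsymm htop g
  refine wlen_le ⟨(l.map fun x => x⁻¹).reverse, ?_, ?_, ?_⟩
  · intro x hx
    simp only [List.mem_reverse, List.mem_map] at hx
    obtain ⟨y, hy, rfl⟩ := hx
    exact hsymm _ (hm y hy)
  · simp [hl]
  · rw [← List.prod_inv_reverse, hp]

omit hsymm htop in
/-- products of lists of length at most `n` over `T` form a finite set. -/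
lemma ball_finite (hT : T.Finite) (n : ℕ) :
    {g : G | ∃ l : List G, (∀ x ∈ l, x ∈ T) ∧ l.length ≤ n ∧ l.prod = g}.Finite := by
  induction n with
  | zero =>
    refine Set.Finite.subset (Set.finite_singleton 1) ?_
    rintro g ⟨l, -, hl, hp⟩
    have : l = [] := List.length_eq_zero_iff.mp (Nat.le_zero.mp hl)
    simp [this] at hp
    simp [← hp]
  | succ n ih =>
    refine Set.Finite.subset (ih.union (hT.biUnion
      (fun s _ => ih.image (fun a => s * a)))) ?_
    rintro g ⟨l, hm, hl, hp⟩
    match l with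
    | [] => exact Or.inl ⟨[], by simp, by simp, hp⟩
    | s :: l' =>
      right
      refine Set.mem_biUnion (hm s (by simp)) ?_
      refine ⟨l'.prod, ⟨l', fun x hx => hm x (by simp [hx]), ?_, rfl⟩, ?_⟩
      · simpa using Nat.succ_le_succ_iff.mp hl
      · simpa using hp

/-- an infinite set contains elements of arbitrarily large word length. -/
lemma exists_large (hT : T.Finite) {E : Set G} (hE : E.Infinite) (n : ℕ) :
    ∃ x ∈ E, n < wlen T x := by
  by_contra h
  push_neg at h
  refine hE (Set.Finite.subset (ball_finite hT n) ?_)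
  intro x hx
  obtain ⟨l, hm, hl, hp⟩ := wlen_spec hsymm htop x
  exact ⟨l, hm, hl ▸ h x hx, hp⟩

end WordLength
section Crossing

variable {G : Type*} [Group G] {T : Set G}

/-- If you start in `E` and exit it by right-multiplying a word over `T`,
some intermediate step crosses the boundary. -/
lemma right_split (E : Set G) :
    ∀ l : List G, (∀ x ∈ l, x ∈ T) → ∀ a, a ∈ E → a * l.prod ∉ E →
    ∃ l₁ s l₂, l = l₁ ++ s :: l₂ ∧ s ∈ T ∧
      ∃ b, b ∈ E ∧ b * s ∉ E ∧ a * l.prod = (b * s) * l₂.prod := by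
  intro l
  induction l with
  | nil =>
    intro _ a ha hna
    simp only [List.prod_nil, mul_one] at hna
    exact (hna ha).elim
  | cons s₀ l' ih =>
    intro hmem a ha hna
    have h1 : a * (s₀ :: l').prod = (a * s₀) * l'.prod := by
      rw [List.prod_cons, mul_assoc]
    by_cases hc : a * s₀ ∈ E
    · obtain ⟨l₁, s, l₂, heq, hsT, b, hb, hbs, hexpr⟩ :=
        ih (fun x hx => hmem x (by simp [hx])) (a * s₀) hc (by rw [h1] at hna; exact hna)
      exact ⟨s₀ :: l₁, s, l₂, by rw [heq]; rfl, hsT, b, hb, hbs, by rw [h1, hexpr]⟩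
    · exact ⟨[], s₀, l', rfl, hmem s₀ (by simp), a, ha, hc, h1⟩

/-- Left-multiplication version. -/
lemma left_split (E : Set G) :
    ∀ l : List G, (∀ x ∈ l, x ∈ T) → ∀ a, a ∈ E → l.prod * a ∉ E →
    ∃ l₁ s l₂, l = l₁ ++ s :: l₂ ∧ s ∈ T ∧
      ∃ b, b ∈ E ∧ s * b ∉ E ∧ l.prod * a = l₁.prod * (s * b) := by
  intro l
  induction l using List.reverseRecOn with
  | nil =>
    intro _ a ha hna
    simp only [List.prod_nil, one_mul] at hna
    exact (hna ha).elim
  | append_singleton l' s₀ ih =>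
    intro hmem a ha hna
    have hp : (l' ++ [s₀]).prod = l'.prod * s₀ := by simp
    have h1 : (l' ++ [s₀]).prod * a = l'.prod * (s₀ * a) := by rw [hp, mul_assoc]
    by_cases hc : s₀ * a ∈ E
    · obtain ⟨l₁, s, l₂, heq, hsT, b, hb, hsb, hexpr⟩ :=
        ih (fun x hx => hmem x (by simp [hx])) (s₀ * a) hc (by rw [h1] at hna; exact hna)
      refine ⟨l₁, s, l₂ ++ [s₀], by rw [heq]; simp, hsT, b, hb, hsb, ?_⟩
      rw [h1, hexpr]
    · exact ⟨l', s₀, [], by simp, hmem s₀ (by simp), a, ha, hc, h1⟩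

variable (hsymm : ∀ s ∈ T, s⁻¹ ∈ T) (htop : Subgroup.closure T = ⊤)
variable {F : Set G} {c : ℕ}

include hsymm htop

/-- key inequality from right almost invariance: points on opposite sides of `E`
are far apart (their "right difference" is long). -/
lemma right_cross (hFc : ∀ f ∈ F, wlen T f ≤ c) (E : Set G)
    (hE : ∀ s ∈ T, ∀ b ∈ E, b * s ∉ E → b * s ∈ F)
    {x y : G} (hx : x ∈ E) (hy : y ∉ E) :
    wlen T x + wlen T y ≤ wlen T (x⁻¹ * y) + 2 * c := by
  obtain ⟨l, hm, hl, hp⟩ := wlen_spec hsymm htop (x⁻¹ * y)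
  have hxl : x * l.prod = y := by rw [hp]; group
  obtain ⟨l₁, s, l₂, heq, hsT, b, hb, hbs, hexpr⟩ :=
    right_split E l hm x hx (by rw [hxl]; exact hy)
  have hbsF : b * s ∈ F := hE s hsT b hb hbs
  have hylen : wlen T y ≤ c + l₂.length := by
    have : y = (b * s) * l₂.prod := by rw [← hxl, hexpr]
    calc wlen T y ≤ wlen T (b * s) + wlen T l₂.prod := by
          rw [this]; exact wlen_mul_le hsymm htop _ _
      _ ≤ c + l₂.length := by
          refine Nat.add_le_add (hFc _ hbsF) (wlen_le ⟨l₂, ?_, rfl, rfl⟩)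
          intro z hz; exact hm z (by rw [heq]; simp [hz])
  have hxlen : wlen T x ≤ c + (l₁.length + 1) := by
    have hx' : x = (b * s) * ((l₁.prod * s)⁻¹) := by
      have h2 : l.prod = l₁.prod * (s * l₂.prod) := by rw [heq]; simp
      have h3 : x = y * l.prod⁻¹ := by rw [← hxl]; group
      rw [h3, ← hxl, hexpr, h2]
      group
    calc wlen T x ≤ wlen T (b * s) + wlen T ((l₁.prod * s)⁻¹) := by
          rw [hx']; exact wlen_mul_le hsymm htop _ _
      _ ≤ c + (l₁.length + 1) := by
          refine Nat.add_le_add (hFc _ hbsF) ?_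
          refine le_trans (wlen_inv_le hsymm htop _) (wlen_le ⟨l₁ ++ [s], ?_, by simp, by simp⟩)
          intro z hz
          rcases List.mem_append.mp hz with h | h
          · exact hm z (by rw [heq]; simp [h])
          · simp only [List.mem_singleton] at h; subst h; exact hsT
  have hlen : l.length = l₁.length + 1 + l₂.length := by rw [heq]; simp; omega
  omega

/-- key inequality from the triviality of the left action. -/
lemma left_cross (hFc : ∀ f ∈ F, wlen T f ≤ c) (E : Set G)
    (hE : ∀ s ∈ T, ∀ b ∈ E, s * b ∉ E → s * b ∈ F)
    {x y : G} (hx : x ∈ E) (hy : y ∉ E) :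
    wlen T x + wlen T y ≤ wlen T (y * x⁻¹) + 2 * c := by
  obtain ⟨l, hm, hl, hp⟩ := wlen_spec hsymm htop (y * x⁻¹)
  have hxl : l.prod * x = y := by rw [hp]; group
  obtain ⟨l₁, s, l₂, heq, hsT, b, hb, hsb, hexpr⟩ :=
    left_split E l hm x hx (by rw [hxl]; exact hy)
  have hsbF : s * b ∈ F := hE s hsT b hb hsb
  have hylen : wlen T y ≤ l₁.length + c := by
    have : y = l₁.prod * (s * b) := by rw [← hxl, hexpr]
    calc wlen T y ≤ wlen T l₁.prod + wlen T (s * b) := by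
          rw [this]; exact wlen_mul_le hsymm htop _ _
      _ ≤ l₁.length + c := by
          refine Nat.add_le_add (wlen_le ⟨l₁, ?_, rfl, rfl⟩) (hFc _ hsbF)
          intro z hz; exact hm z (by rw [heq]; simp [hz])
  have hxlen : wlen T x ≤ (l₂.length + 1) + c := by
    have hx' : x = ((s :: l₂).prod)⁻¹ * (s * b) := by
      have h2 : l.prod = l₁.prod * (s :: l₂).prod := by rw [heq]; simp
      have h3 : x = l.prod⁻¹ * y := by rw [← hxl]; group
      rw [h3, ← hxl, hexpr, h2]
      group
    calc wlen T x ≤ wlen T ((s :: l₂).prod)⁻¹ + wlen T (s * b) := by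
          rw [hx']; exact wlen_mul_le hsymm htop _ _
      _ ≤ (l₂.length + 1) + c := by
          refine Nat.add_le_add ?_ (hFc _ hsbF)
          refine le_trans (wlen_inv_le hsymm htop _) (wlen_le ⟨s :: l₂, ?_, by simp, rfl⟩)
          intro z hz
          rcases List.mem_cons.mp hz with h | h
          · subst h; exact hsT
          · exact hm z (by rw [heq]; simp [h])
  have hlen : l.length = l₁.length + 1 + l₂.length := by rw [heq]; simp; omega
  omega

end Crossing
section Main

variable {G : Type*} [Group G]

lemma rdiff_finite {A : Set G} (hA : AlmostInvariant A) (s : G) :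
    ((fun a => a * s) '' A \ A).Finite :=
  (hA s).subset (by rw [Set.symmDiff_def]; exact Set.subset_union_right)

lemma rdiff_finite' {A : Set G} (hA : AlmostInvariant A) (s : G) :
    (A \ (fun a => a * s) '' A).Finite :=
  (hA s).subset (by rw [Set.symmDiff_def]; exact Set.subset_union_left)

lemma ldiff_finite {A : Set G} (hA : ActsTrivially A) (s : G) :
    ((fun a => s * a) '' A \ A).Finite :=
  (hA s).subset (by rw [Set.symmDiff_def]; exact Set.subset_union_right)

/-- The finitely generated case. -/
lemma fg_case (T : Set G) (hfin : T.Finite) (hsymm : ∀ s ∈ T, s⁻¹ ∈ T)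
    (htop : Subgroup.closure T = ⊤) (A B C : Set G)
    (hAai : AlmostInvariant A) (hBai : AlmostInvariant B)
    (hAat : ActsTrivially A) (hBat : ActsTrivially B)
    (hAinf : A.Infinite) (hBinf : B.Infinite) (hCinf : C.Infinite)
    (hAB : ∀ a ∈ A, a ∉ B) (hCA : ∀ z ∈ C, z ∉ A) (hCB : ∀ z ∈ C, z ∉ B) : False := by
  classical
  set F : Set G := ⋃ s ∈ T,
      (((fun a => a * s) '' A \ A) ∪ ((fun a => a * s) '' B \ B) ∪
       ((fun a => s * a) '' A \ A) ∪ ((fun a => s * a) '' B \ B)) with hF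
  have hFfin : F.Finite := by
    refine Set.Finite.biUnion hfin (fun s _ => ?_)
    exact (((rdiff_finite hAai s).union (rdiff_finite hBai s)).union
      (ldiff_finite hAat s)).union (ldiff_finite hBat s)
  obtain ⟨c, hc⟩ : ∃ c : ℕ, ∀ f ∈ F, wlen T f ≤ c := by
    obtain ⟨c, hc⟩ := (hFfin.image (wlen T)).bddAbove
    exact ⟨c, fun f hf => hc (Set.mem_image_of_mem _ hf)⟩
  -- crossing hypotheses
  have hAr : ∀ s ∈ T, ∀ b ∈ A, b * s ∉ A → b * s ∈ F := by
    intro s hs b hb hbs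
    exact Set.mem_biUnion hs (by left; left; left; exact ⟨⟨b, hb, rfl⟩, hbs⟩)
  have hBr : ∀ s ∈ T, ∀ b ∈ B, b * s ∉ B → b * s ∈ F := by
    intro s hs b hb hbs
    exact Set.mem_biUnion hs (by left; left; right; exact ⟨⟨b, hb, rfl⟩, hbs⟩)
  have hAl : ∀ s ∈ T, ∀ b ∈ A, s * b ∉ A → s * b ∈ F := by
    intro s hs b hb hbs
    exact Set.mem_biUnion hs (by left; right; exact ⟨⟨b, hb, rfl⟩, hbs⟩)
  have hBl : ∀ s ∈ T, ∀ b ∈ B, s * b ∉ B → s * b ∈ F := by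
    intro s hs b hb hbs
    exact Set.mem_biUnion hs (by right; exact ⟨⟨b, hb, rfl⟩, hbs⟩)
  -- choose far points
  obtain ⟨z, hz, hzlen⟩ := exists_large hsymm htop hfin hCinf (3 * c)
  obtain ⟨x, hx, hxlen⟩ := exists_large hsymm htop hfin hAinf (wlen T z)
  obtain ⟨y, hy, hylen⟩ := exists_large hsymm htop hfin hBinf (wlen T z)
  have hzA : z ∉ A := hCA z hz
  have hzB : z ∉ B := hCB z hz
  have hyA : y ∉ A := fun h => hAB y h hy
  -- claim 1
  have claim1 : wlen T (x * z) + wlen T z ≤ wlen T x + 2 * c := by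
    by_cases hxz : x * z ∈ A
    · have h := left_cross hsymm htop hc A hAl hxz hzA
      have he : z * (x * z)⁻¹ = x⁻¹ := by group
      rw [he] at h
      have := wlen_inv_le hsymm htop x
      omega
    · have h := right_cross hsymm htop hc A hAr hx hxz
      have he : x⁻¹ * (x * z) = z := by group
      rw [he] at h
      omega
  have claim2 : wlen T (y * z) + wlen T z ≤ wlen T y + 2 * c := by
    by_cases hyz : y * z ∈ B
    · have h := left_cross hsymm htop hc B hBl hyz hzB
      have he : z * (y * z)⁻¹ = y⁻¹ := by group
      rw [he] at h
      have := wlen_inv_le hsymm htop y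
      omega
    · have h := right_cross hsymm htop hc B hBr hy hyz
      have he : y⁻¹ * (y * z) = z := by group
      rw [he] at h
      omega
  -- final
  have hfinal : wlen T x + wlen T y ≤ wlen T (y * x⁻¹) + 2 * c :=
    left_cross hsymm htop hc A hAl hx hyA
  have hsplit : wlen T (y * x⁻¹) ≤ wlen T (y * z) + wlen T (x * z) := by
    have he : y * x⁻¹ = (y * z) * (x * z)⁻¹ := by group
    calc wlen T (y * x⁻¹) = wlen T ((y * z) * (x * z)⁻¹) := by rw [he]
      _ ≤ wlen T (y * z) + wlen T (x * z)⁻¹ := wlen_mul_le hsymm htop _ _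
      _ ≤ wlen T (y * z) + wlen T (x * z) :=
          Nat.add_le_add_left (wlen_inv_le hsymm htop _) _
  omega

end Main
section MainLemma

variable {G : Type*} [Group G]

lemma list_of_mem_closure {S : Set G} (hsymm : ∀ s ∈ S, s⁻¹ ∈ S) {g : G}
    (hg : g ∈ Subgroup.closure S) : ∃ l : List G, (∀ y ∈ l, y ∈ S) ∧ l.prod = g := by
  have hg' : g ∈ Submonoid.closure (S ∪ S⁻¹) := by
    rw [← Subgroup.closure_toSubmonoid] at *
    exact hg
  obtain ⟨l, hl, hprod⟩ := Submonoid.exists_list_of_mem_closure hg'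
  refine ⟨l, fun y hy => ?_, hprod⟩
  rcases hl y hy with h | h
  · exact h
  · simpa using hsymm _ (Set.mem_inv.mp h)

lemma forward_closed {S F' : Set G} {H : Subgroup G} (hSH : S ⊆ (H : Set G))
    (x : G) (hx : ∀ f ∈ F', x⁻¹ * f ∉ H) (E : Set G)
    (hE : ∀ s ∈ S, ∀ b ∈ E, b * s ∉ E → b * s ∈ F') :
    ∀ l : List G, (∀ y ∈ l, y ∈ S) → ∀ u, u ∈ E → x⁻¹ * u ∈ H → u * l.prod ∈ E := by
  intro l
  induction l with
  | nil => intro _ u hu _; simpa using hu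
  | cons s l' ih =>
    intro hmem u hu huH
    have hsS : s ∈ S := hmem s (by simp)
    have husE : u * s ∈ E := by
      by_contra hus
      exact hx (u * s) (hE s hsS u hu hus)
        (by rw [← mul_assoc]; exact mul_mem huH (hSH hsS))
    have husH : x⁻¹ * (u * s) ∈ H := by
      rw [← mul_assoc]; exact mul_mem huH (hSH hsS)
    have := ih (fun y hy => hmem y (by simp [hy])) (u * s) husE husH
    rw [List.prod_cons, ← mul_assoc]
    exact this

/-- The main lemma: `A`, `B` disjoint NCC sets on which `G` acts trivially, and `C` a
third infinite set disjoint from both, in a non-locally-finite group: contradiction. -/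
lemma main_lemma (hnlf : ¬ LocallyFiniteGroup G) (A B C : Set G)
    (hAn : IsNCC A) (hBn : IsNCC B) (hAat : ActsTrivially A) (hBat : ActsTrivially B)
    (hCinf : C.Infinite) (hAB : Disjoint A B) (hCA : Disjoint C A) (hCB : Disjoint C B) :
    False := by
  classical
  rw [LocallyFiniteGroup] at hnlf
  push_neg at hnlf
  obtain ⟨S₀, hS₀fin, hS₀⟩ := hnlf
  set S : Set G := S₀ ∪ S₀⁻¹ with hSdef
  have hSfin : S.Finite := hS₀fin.union hS₀fin.inv
  have hSsymm : ∀ s ∈ S, s⁻¹ ∈ S := by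
    intro s hs
    rcases hs with h | h
    · exact Or.inr (by simpa using h)
    · exact Or.inl (by simpa using Set.mem_inv.mp h)
  set H : Subgroup G := Subgroup.closure S with hHdef
  have hSH : S ⊆ (H : Set G) := Subgroup.subset_closure
  have hHinf : (H : Set G).Infinite := by
    have : S₀ ⊆ (H : Set G) := fun s hs => hSH (Or.inl hs)
    exact hS₀ H this
  have hcosetinf : ∀ w : G, {g : G | w⁻¹ * g ∈ H}.Infinite := by
    intro w
    have heq : {g : G | w⁻¹ * g ∈ H} = (fun h => w * h) '' (H : Set G) := by
      ext g
      simp only [Set.mem_setOf_eq, Set.mem_image]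
      constructor
      · intro hg; exact ⟨w⁻¹ * g, hg, by group⟩
      · rintro ⟨h, hh, rfl⟩; simpa using hh
    rw [heq]
    exact hHinf.image (Set.injOn_of_injective (mul_right_injective w))
  have hAinf := hAn.2.1
  have hBinf := hBn.2.1
  set F' : Set G := ⋃ s ∈ S,
      (((fun a => a * s) '' A \ A) ∪ (A \ (fun a => a * s) '' A) ∪
       ((fun a => a * s) '' B \ B) ∪ (B \ (fun a => a * s) '' B)) with hF'
  have hF'fin : F'.Finite := by
    refine Set.Finite.biUnion hSfin (fun s _ => ?_)
    exact (((rdiff_finite hAn.1 s).union (rdiff_finite' hAn.1 s)).union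
      (rdiff_finite hBn.1 s)).union (rdiff_finite' hBn.1 s)
  have hAE : ∀ s ∈ S, ∀ b ∈ A, b * s ∉ A → b * s ∈ F' := by
    intro s hs b hb hbs
    exact Set.mem_biUnion hs (by left; left; left; exact ⟨⟨b, hb, rfl⟩, hbs⟩)
  have hBE : ∀ s ∈ S, ∀ b ∈ B, b * s ∉ B → b * s ∈ F' := by
    intro s hs b hb hbs
    exact Set.mem_biUnion hs (by left; right; exact ⟨⟨b, hb, rfl⟩, hbs⟩)
  by_cases hcase : ∃ x : G, ∀ f ∈ F', x⁻¹ * f ∉ H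
  · -- coset case
    obtain ⟨x₀, hx₀⟩ := hcase
    -- generic argument producing x₀ ∈ E
    have key : ∀ E : Set G, (∀ s ∈ S, ∀ b ∈ E, b * s ∉ E → b * s ∈ F') →
        ActsTrivially E → E.Infinite → x₀ ∈ E := by
      intro E hE hEat hEinf
      -- cosets with a clean base point and a point of E are contained in E
      have haux : ∀ x : G, (∀ f ∈ F', x⁻¹ * f ∉ H) → ∀ u ∈ E, x⁻¹ * u ∈ H →
          ∀ v : G, x⁻¹ * v ∈ H → v ∈ E := by
        intro x hx u hu huH v hvH
        have huv : u⁻¹ * v ∈ H := by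
          have := mul_mem (inv_mem huH) hvH
          simpa [mul_assoc] using this
        obtain ⟨l, hl, hprod⟩ := list_of_mem_closure hSsymm huv
        have := forward_closed hSH x hx E hE l hl u hu huH
        rwa [hprod, ← mul_assoc, mul_inv_cancel, one_mul] at this
      -- some coset meets E in an infinite set
      have step1 : ∃ y : G, (E ∩ {g | y⁻¹ * g ∈ H}).Infinite := by
        by_contra hfin'
        push_neg at hfin'
        have cover : E ⊆ ⋃ f ∈ F', (E ∩ {g | f⁻¹ * g ∈ H}) := by
          intro a ha
          by_cases hgood : ∀ f ∈ F', a⁻¹ * f ∉ H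
          · exfalso
            have hsub : {g : G | a⁻¹ * g ∈ H} ⊆ E := fun v hv =>
              haux a hgood a ha (by simpa using one_mem H) v hv
            have hinf2 : (E ∩ {g : G | a⁻¹ * g ∈ H}).Infinite :=
              (hcosetinf a).mono (fun g hg => ⟨hsub hg, hg⟩)
            exact hinf2 (hfin' a)
          · push_neg at hgood
            obtain ⟨f, hf, hfH⟩ := hgood
            refine Set.mem_biUnion hf ⟨ha, ?_⟩
            have := inv_mem hfH
            simpa [mul_inv_rev] using this
        exact hEinf ((hF'fin.biUnion (fun f _ => hfin' f)).subset cover)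
      obtain ⟨y, hy⟩ := step1
      -- transport it to the coset of x₀ using triviality of the left action
      set g : G := x₀ * y⁻¹ with hgdef
      have himg : ((fun a => g * a) '' (E ∩ {u | y⁻¹ * u ∈ H})).Infinite :=
        hy.image (Set.injOn_of_injective (mul_right_injective g))
      have hdiffinf := himg.diff (ldiff_finite hEat g)
      obtain ⟨u, hu⟩ := hdiffinf.nonempty
      obtain ⟨⟨v, ⟨hvE, hvH⟩, rfl⟩, hu2⟩ := hu
      have huE : g * v ∈ E := by
        by_contra h
        exact hu2 ⟨⟨v, hvE, rfl⟩, h⟩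
      have huH : x₀⁻¹ * (g * v) ∈ H := by
        have : x₀⁻¹ * (g * v) = y⁻¹ * v := by rw [hgdef]; group
        rw [this]; exact hvH
      exact haux x₀ hx₀ (g * v) huE huH x₀ (by simpa using one_mem H)
    have hx₀A : x₀ ∈ A := key A hAE hAat hAinf
    have hx₀B : x₀ ∈ B := key B hBE hBat hBinf
    exact (Set.disjoint_left.mp hAB hx₀A) hx₀B
  · -- finitely generated case
    push_neg at hcase
    set T : Set G := S ∪ F' ∪ F'⁻¹ with hTdef
    have hTfin : T.Finite := (hSfin.union hF'fin).union hF'fin.inv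
    have hTsymm : ∀ s ∈ T, s⁻¹ ∈ T := by
      intro s hs
      rcases hs with (h | h) | h
      · exact Or.inl (Or.inl (hSsymm s h))
      · exact Or.inr (by simpa using h)
      · exact Or.inl (Or.inr (by simpa using Set.mem_inv.mp h))
    have hTtop : Subgroup.closure T = ⊤ := by
      rw [eq_top_iff]
      intro g _
      obtain ⟨f, hf, hgf⟩ := hcase g
      have hfg : f⁻¹ * g ∈ H := by
        have := inv_mem hgf
        simpa [mul_inv_rev] using this
      have hHle : H ≤ Subgroup.closure T :=
        Subgroup.closure_mono (fun s hs => Or.inl (Or.inl hs))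
      have : g = f * (f⁻¹ * g) := by group
      rw [this]
      exact mul_mem (Subgroup.subset_closure (Or.inl (Or.inr hf))) (hHle hfg)
    exact fg_case T hTfin hTsymm hTtop A B C hAn.1 hBn.1 hAat hBat hAinf hBinf hCinf
      (fun a ha => Set.disjoint_left.mp hAB ha)
      (fun z hz => Set.disjoint_left.mp hCA hz)
      (fun z hz => Set.disjoint_left.mp hCB hz)

end MainLemma

/-- Lemma 5.9: if a countable, non-locally-finite group contains three pairwise disjoint
NCC sets, then it acts trivially on at most one of them. -/
theorem actsTrivially_at_most_one
    {G : Type*} [Group G] [Countable G]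
    (hnlf : ¬ LocallyFiniteGroup G)
    (E₁ E₂ E₃ : Set G) (h₁ : IsNCC E₁) (h₂ : IsNCC E₂) (h₃ : IsNCC E₃)
    (h₁₂ : Disjoint E₁ E₂) (h₁₃ : Disjoint E₁ E₃) (h₂₃ : Disjoint E₂ E₃) :
    ¬ (ActsTrivially E₁ ∧ ActsTrivially E₂) ∧
    ¬ (ActsTrivially E₁ ∧ ActsTrivially E₃) ∧
    ¬ (ActsTrivially E₂ ∧ ActsTrivially E₃) := by
  refine ⟨?_, ?_, ?_⟩
  · rintro ⟨t1, t2⟩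
    exact main_lemma hnlf E₁ E₂ E₃ h₁ h₂ t1 t2 h₃.2.1 h₁₂ h₁₃.symm h₂₃.symm
  · rintro ⟨t1, t3⟩
    exact main_lemma hnlf E₁ E₃ E₂ h₁ h₃ t1 t3 h₂.2.1 h₁₃ h₁₂.symm h₂₃
  · rintro ⟨t2, t3⟩
    exact main_lemma hnlf E₂ E₃ E₁ h₂ h₃ t2 t3 h₁.2.1 h₂₃ h₁₂ h₁₃
end

section
/- Let G be a countable group. If G contains three pairwise disjoint infinite almost invariant subsets, then for every natural number n, G contains n pairwise disjoint infinite almost invariant subsets. (Equivalently: the number of ends of a countable group is either infinite or at most 2.) -/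
open Set

namespace EndsAux
set_option linter.unusedSectionVars false

variable {G : Type*} [Group G]

/-- Right translate of a set. -/
def Rt (A : Set G) (g : G) : Set G := (fun a => a * g) '' A

/-- Left translate of a set. -/
def Lt (g : G) (A : Set G) : Set G := (fun a => g * a) '' A

lemma mem_Rt {A : Set G} {g x : G} : x ∈ Rt A g ↔ x * g⁻¹ ∈ A := by
  constructor
  · rintro ⟨a, ha, rfl⟩; simpa
  · intro h; exact ⟨x * g⁻¹, h, by simp⟩

lemma mem_Lt {A : Set G} {g x : G} : x ∈ Lt g A ↔ g⁻¹ * x ∈ A := by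
  constructor
  · rintro ⟨a, ha, rfl⟩; simpa
  · intro h; exact ⟨g⁻¹ * x, h, by simp⟩

lemma Rt_Rt {A : Set G} (g h : G) : Rt (Rt A g) h = Rt A (g * h) := by
  ext x; simp [mem_Rt, mul_assoc]

lemma Rt_one {A : Set G} : Rt A 1 = A := by ext x; simp [mem_Rt]

lemma Lt_Lt {A : Set G} (g h : G) : Lt g (Lt h A) = Lt (g * h) A := by
  ext x; simp [mem_Lt, mul_assoc]

lemma Lt_one {A : Set G} : Lt 1 A = A := by ext x; simp [mem_Lt]

lemma Rt_diff {A B : Set G} (g : G) : Rt (A \ B) g = Rt A g \ Rt B g := by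
  ext x; simp [mem_Rt, mem_diff]

lemma Rt_compl {A : Set G} (g : G) : Rt Aᶜ g = (Rt A g)ᶜ := by
  ext x; simp [mem_Rt]

lemma Lt_diff {A B : Set G} (g : G) : Lt g (A \ B) = Lt g A \ Lt g B := by
  ext x; simp [mem_Lt, mem_diff]

lemma Lt_inter {A B : Set G} (g : G) : Lt g (A ∩ B) = Lt g A ∩ Lt g B := by
  ext x; simp [mem_Lt, mem_inter_iff]

lemma Lt_Rt {A : Set G} (g h : G) : Lt g (Rt A h) = Rt (Lt g A) h := by
  ext x; simp [mem_Lt, mem_Rt, mul_assoc]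

lemma Rt_finite {A : Set G} (g : G) (h : A.Finite) : (Rt A g).Finite := h.image _

lemma Lt_finite {A : Set G} (g : G) (h : A.Finite) : (Lt g A).Finite := h.image _

lemma Rt_finite_iff {A : Set G} (g : G) : (Rt A g).Finite ↔ A.Finite := by
  constructor
  · intro h; have := Rt_finite g⁻¹ h; rwa [Rt_Rt, mul_inv_cancel, Rt_one] at this
  · exact Rt_finite g

lemma Lt_finite_iff {A : Set G} (g : G) : (Lt g A).Finite ↔ A.Finite := by
  constructor
  · intro h; have := Lt_finite g⁻¹ h; rwa [Lt_Lt, inv_mul_cancel, Lt_one] at this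
  · exact Lt_finite g

lemma Rt_infinite_iff {A : Set G} (g : G) : (Rt A g).Infinite ↔ A.Infinite := by
  rw [← not_iff_not]; simp [Set.not_infinite, Rt_finite_iff]

lemma Lt_infinite_iff {A : Set G} (g : G) : (Lt g A).Infinite ↔ A.Infinite := by
  rw [← not_iff_not]; simp [Set.not_infinite, Lt_finite_iff]

/-- `A` and `B` agree up to finitely many elements. -/
def EqF (A B : Set G) : Prop := (A \ B).Finite ∧ (B \ A).Finite

lemma EqF.refl (A : Set G) : EqF A A := by simp [EqF]

lemma EqF.symm {A B : Set G} (h : EqF A B) : EqF B A := ⟨h.2, h.1⟩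

lemma EqF.trans {A B C : Set G} (h1 : EqF A B) (h2 : EqF B C) : EqF A C := by
  constructor
  · exact (h1.1.union h2.1).subset fun x hx => by
      by_cases hB : x ∈ B
      · exact Or.inr ⟨hB, hx.2⟩
      · exact Or.inl ⟨hx.1, hB⟩
  · exact (h2.2.union h1.2).subset fun x hx => by
      by_cases hB : x ∈ B
      · exact Or.inr ⟨hB, hx.2⟩
      · exact Or.inl ⟨hx.1, hB⟩

lemma EqF.lt {A B : Set G} (g : G) (h : EqF A B) : EqF (Lt g A) (Lt g B) := by
  refine ⟨?_, ?_⟩ <;> rw [← Lt_diff]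
  · exact Lt_finite g h.1
  · exact Lt_finite g h.2

lemma EqF.rt {A B : Set G} (g : G) (h : EqF A B) : EqF (Rt A g) (Rt B g) := by
  refine ⟨?_, ?_⟩ <;> rw [← Rt_diff]
  · exact Rt_finite g h.1
  · exact Rt_finite g h.2

lemma EqF.infinite {A B : Set G} (h : EqF A B) (hA : A.Infinite) : B.Infinite := by
  intro hBfin
  exact hA (((hBfin.union h.1).subset) fun x hx => by
    by_cases hB : x ∈ B
    · exact Or.inl hB
    · exact Or.inr ⟨hx, hB⟩)

/-- interface to almost invariance -/
lemma ai_diff_fin {A : Set G} (hA : AlmostInvariant A) (g : G) : (A \ Rt A g).Finite :=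
  (hA g).subset (by rw [Set.symmDiff_def]; exact fun x hx => Or.inl hx)

lemma ai_diff_fin' {A : Set G} (hA : AlmostInvariant A) (g : G) : (Rt A g \ A).Finite :=
  (hA g).subset (by rw [Set.symmDiff_def]; exact fun x hx => Or.inr hx)

lemma ai_eqF {A : Set G} (hA : AlmostInvariant A) (g : G) : EqF (Rt A g) A :=
  ⟨ai_diff_fin' hA g, ai_diff_fin hA g⟩

lemma almostInvariant_of {A : Set G}
    (h : ∀ g, (A \ Rt A g).Finite ∧ (Rt A g \ A).Finite) : AlmostInvariant A := by
  intro g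
  rw [Set.symmDiff_def]
  exact ((h g).1.union (h g).2)

lemma ai_compl {A : Set G} (hA : AlmostInvariant A) : AlmostInvariant Aᶜ := by
  refine almostInvariant_of fun g => ?_
  rw [Rt_compl]
  constructor
  · have : Aᶜ \ (Rt A g)ᶜ = Rt A g \ A := by ext x; simp [mem_diff]; tauto
    rw [this]; exact ai_diff_fin' hA g
  · have : (Rt A g)ᶜ \ Aᶜ = A \ Rt A g := by ext x; simp [mem_diff]; tauto
    rw [this]; exact ai_diff_fin hA g

lemma ai_inter {A B : Set G} (hA : AlmostInvariant A) (hB : AlmostInvariant B) :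
    AlmostInvariant (A ∩ B) := by
  refine almostInvariant_of fun g => ?_
  have hR : Rt (A ∩ B) g = Rt A g ∩ Rt B g := by ext x; simp [mem_Rt, mem_inter_iff]
  rw [hR]
  constructor
  · refine ((ai_diff_fin hA g).union (ai_diff_fin hB g)).subset fun x hx => ?_
    rcases hx with ⟨⟨hxA, hxB⟩, hx2⟩
    simp only [mem_inter_iff, not_and] at hx2
    by_cases h1 : x ∈ Rt A g
    · exact Or.inr ⟨hxB, hx2 h1⟩
    · exact Or.inl ⟨hxA, h1⟩
  · refine ((ai_diff_fin' hA g).union (ai_diff_fin' hB g)).subset fun x hx => ?_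
    rcases hx with ⟨⟨hxA, hxB⟩, hx2⟩
    simp only [mem_inter_iff, not_and] at hx2
    by_cases h1 : x ∈ A
    · exact Or.inr ⟨hxB, hx2 h1⟩
    · exact Or.inl ⟨hxA, h1⟩

lemma ai_union {A B : Set G} (hA : AlmostInvariant A) (hB : AlmostInvariant B) :
    AlmostInvariant (A ∪ B) := by
  have := ai_compl (ai_inter (ai_compl hA) (ai_compl hB))
  rwa [← compl_union, compl_compl] at this

lemma ai_diff {A B : Set G} (hA : AlmostInvariant A) (hB : AlmostInvariant B) :
    AlmostInvariant (A \ B) := by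
  have := ai_inter hA (ai_compl hB)
  rwa [← diff_eq] at this

lemma ai_lt {A : Set G} (g : G) (hA : AlmostInvariant A) :
    AlmostInvariant (Lt g A) := by
  refine almostInvariant_of fun h => ?_
  rw [← Lt_Rt]
  constructor
  · rw [← Lt_diff]; exact Lt_finite g (ai_diff_fin hA h)
  · rw [← Lt_diff]; exact Lt_finite g (ai_diff_fin' hA h)

lemma ai_of_finite {A : Set G} (h : A.Finite) : AlmostInvariant A :=
  almostInvariant_of fun g => ⟨h.diff, (Rt_finite g h).diff⟩

lemma inter_infinite_of_diff_finite {A B : Set G} (hA : A.Infinite) (h : (A \ B).Finite) :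
    (A ∩ B).Infinite := by
  intro hfin
  refine hA ((h.union hfin).subset fun x hx => ?_)
  by_cases hB : x ∈ B
  · exact Or.inr ⟨hx, hB⟩
  · exact Or.inl ⟨hx, hB⟩

lemma exists_infinite_of_iUnion {ι : Type*} [Finite ι] {f : ι → Set G}
    (h : (⋃ i, f i).Infinite) : ∃ i, (f i).Infinite := by
  by_contra hc
  push_neg at hc
  exact h (Set.finite_iUnion hc)


/-! ### Families -/

def IsFam {k : ℕ} (A : Fin k → Set G) : Prop :=
  (∀ i, (A i).Infinite ∧ AlmostInvariant (A i)) ∧ Pairwise (Function.onFun Disjoint A)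

lemma isFam_castLE {k m : ℕ} (h : m ≤ k) {A : Fin k → Set G} (hA : IsFam A) :
    IsFam (A ∘ Fin.castLE h) := by
  refine ⟨fun i => hA.1 _, fun i j hij => ?_⟩
  exact hA.2 (fun e => hij (Fin.castLE_injective h e))

lemma isFam_snoc {k : ℕ} {A : Fin k → Set G} (hA : IsFam A) {X : Set G}
    (hXinf : X.Infinite) (hXai : AlmostInvariant X) (hdisj : ∀ i, Disjoint (A i) X) :
    IsFam (Fin.snoc A X) := by
  constructor
  · intro i
    refine Fin.lastCases ?_ (fun j => ?_) i
    · rw [Fin.snoc_last]; exact ⟨hXinf, hXai⟩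
    · rw [Fin.snoc_castSucc]; exact hA.1 j
  · intro i j hij
    revert hij
    refine Fin.lastCases (fun hij => ?_) (fun i' => ?_) i
    · revert hij
      refine Fin.lastCases (fun hij => absurd rfl hij) (fun j' hij => ?_) j
      have : Disjoint ((Fin.snoc A X : Fin (k+1) → Set G) (Fin.last k)) ((Fin.snoc A X : Fin (k+1) → Set G) (Fin.castSucc j')) := by
        rw [Fin.snoc_last, Fin.snoc_castSucc]; exact (hdisj j').symm
      exact this

    · intro hij
      revert hij
      refine Fin.lastCases (fun hij => ?_) (fun j' hij => ?_) j
      · have : Disjoint ((Fin.snoc A X : Fin (k+1) → Set G) (Fin.castSucc i')) ((Fin.snoc A X : Fin (k+1) → Set G) (Fin.last k)) := by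
          rw [Fin.snoc_last, Fin.snoc_castSucc]; exact hdisj i'
        exact this
      · have : Disjoint ((Fin.snoc A X : Fin (k+1) → Set G) (Fin.castSucc i')) ((Fin.snoc A X : Fin (k+1) → Set G) (Fin.castSucc j')) := by
          rw [Fin.snoc_castSucc, Fin.snoc_castSucc]
          exact hA.2 (fun e => hij (congrArg Fin.castSucc e))
        exact this

lemma isFam_update {k : ℕ} {A : Fin k → Set G} (hA : IsFam A) (i₀ : Fin k) {Y : Set G}
    (hY : Y ⊆ A i₀) (hYinf : Y.Infinite) (hYai : AlmostInvariant Y) :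
    IsFam (Function.update A i₀ Y) := by
  constructor
  · intro i
    by_cases h : i = i₀
    · subst h; rw [Function.update_self]; exact ⟨hYinf, hYai⟩
    · rw [Function.update_of_ne h]; exact hA.1 i
  · intro i j hij
    show Disjoint (Function.update A i₀ Y i) (Function.update A i₀ Y j)
    by_cases hi : i = i₀ <;> by_cases hj : j = i₀
    · exact absurd (hi.trans hj.symm) hij
    · subst hi; rw [Function.update_self, Function.update_of_ne hj]
      exact Disjoint.mono_left hY (hA.2 (fun e => hij e))
    · subst hj; rw [Function.update_self, Function.update_of_ne hi]
      exact Disjoint.mono_right hY (hA.2 (fun e => hij e))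
    · rw [Function.update_of_ne hi, Function.update_of_ne hj]
      exact hA.2 hij

lemma isFam_split {k : ℕ} {A : Fin k → Set G} (hA : IsFam A) (i₀ : Fin k) {X : Set G}
    (hXai : AlmostInvariant X) (h1 : (A i₀ ∩ X).Infinite) (h2 : (A i₀ \ X).Infinite) :
    ∃ B : Fin (k+1) → Set G, IsFam B := by
  have hfam' : IsFam (Function.update A i₀ (A i₀ ∩ X)) :=
    isFam_update hA i₀ (inter_subset_left) h1 (ai_inter (hA.1 i₀).2 hXai)
  refine ⟨Fin.snoc (Function.update A i₀ (A i₀ ∩ X)) (A i₀ \ X), ?_⟩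
  refine isFam_snoc hfam' h2 (ai_diff (hA.1 i₀).2 hXai) ?_
  intro i
  by_cases hi : i = i₀
  · subst hi; rw [Function.update_self]
    exact Set.disjoint_left.mpr (fun x hx hx2 => hx2.2 hx.2)
  · rw [Function.update_of_ne hi]
    exact Disjoint.mono_right (diff_subset) (hA.2 hi)

/-! ### Consequences of maximality -/

section Max

variable {k : ℕ} {A : Fin k → Set G}

/-- no almost invariant set splits an atom -/
lemma noSplit (hA : IsFam A) (hmax : ∀ B : Fin (k+1) → Set G, ¬ IsFam B)
    {X : Set G} (hX : AlmostInvariant X) (i : Fin k) (h1 : (A i ∩ X).Infinite) :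
    (A i \ X).Finite := by
  by_contra h2
  rw [← Set.not_infinite, not_not] at h2
  obtain ⟨B, hB⟩ := isFam_split hA i hX h1 h2
  exact hmax B hB

lemma Rt_iUnion {ι : Type*} (f : ι → Set G) (g : G) :
    Rt (⋃ i, f i) g = ⋃ i, Rt (f i) g := by
  ext x; simp [mem_Rt]

lemma ai_iUnion {ι : Type*} [Finite ι] {f : ι → Set G} (h : ∀ i, AlmostInvariant (f i)) :
    AlmostInvariant (⋃ i, f i) := by
  refine almostInvariant_of fun g => ?_
  rw [Rt_iUnion]
  constructor
  · refine (Set.finite_iUnion (fun i => ai_diff_fin (h i) g)).subset ?_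
    intro x hx
    obtain ⟨hx1, hx2⟩ := hx
    simp only [mem_iUnion] at hx1 hx2 ⊢
    obtain ⟨i, hi⟩ := hx1
    exact ⟨i, hi, fun hc => hx2 ⟨i, hc⟩⟩
  · refine (Set.finite_iUnion (fun i => ai_diff_fin' (h i) g)).subset ?_
    intro x hx
    obtain ⟨hx1, hx2⟩ := hx
    simp only [mem_iUnion] at hx1 hx2 ⊢
    obtain ⟨i, hi⟩ := hx1
    exact ⟨i, hi, fun hc => hx2 ⟨i, hc⟩⟩

lemma Rfin (hA : IsFam A) (hmax : ∀ B : Fin (k+1) → Set G, ¬ IsFam B) :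
    ((⋃ i, A i)ᶜ).Finite := by
  by_contra h
  rw [← Set.not_infinite, not_not] at h
  refine hmax _ (isFam_snoc hA h (ai_compl (ai_iUnion (fun i => (hA.1 i).2))) ?_)
  intro i
  exact Set.disjoint_left.mpr (fun x hx hx2 => hx2 (mem_iUnion.mpr ⟨i, hx⟩))

/-- an infinite a.i. set has infinite intersection with some atom -/
lemma exists_atom_meet (hA : IsFam A) (hmax : ∀ B : Fin (k+1) → Set G, ¬ IsFam B)
    {X : Set G} (hXinf : X.Infinite) : ∃ j, (X ∩ A j).Infinite := by
  have hcov : X ⊆ (⋃ j, X ∩ A j) ∪ (X ∩ (⋃ j, A j)ᶜ) := by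
    intro x hx
    by_cases h : x ∈ ⋃ j, A j
    · obtain ⟨j, hj⟩ := mem_iUnion.mp h
      exact Or.inl (mem_iUnion.mpr ⟨j, hx, hj⟩)
    · exact Or.inr ⟨hx, h⟩
  by_contra hc
  push_neg at hc
  exact hXinf (((Set.finite_iUnion hc).union ((Rfin hA hmax).subset
    (inter_subset_right))).subset hcov)

/-- atoms are distinguished mod finite -/
lemma atom_unique (hA : IsFam A) {X : Set G} (hXinf : X.Infinite) {j j' : Fin k}
    (h1 : (X \ A j).Finite) (h2 : (X \ A j').Finite) : j = j' := by
  by_contra hne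
  have hd : A j ∩ A j' = ∅ := Set.disjoint_iff_inter_eq_empty.mp (hA.2 hne)
  refine hXinf ((h1.union h2).subset fun x hx => ?_)
  by_cases hj : x ∈ A j
  · refine Or.inr ⟨hx, fun hj' => ?_⟩
    have : x ∈ A j ∩ A j' := ⟨hj, hj'⟩
    simp [hd] at this
  · exact Or.inl ⟨hx, hj⟩

/-- Rigidity: each left translate of an atom matches an atom mod finite. -/
lemma rigidity (hA : IsFam A) (hmax : ∀ B : Fin (k+1) → Set G, ¬ IsFam B)
    (g : G) (i : Fin k) : ∃ j, EqF (Lt g (A i)) (A j) := by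
  set Xg := Lt g (A i) with hXg
  have hXai : AlmostInvariant Xg := ai_lt g (hA.1 i).2
  have hXinf : Xg.Infinite := (Lt_infinite_iff g).mpr (hA.1 i).1
  obtain ⟨j, hj⟩ := exists_atom_meet hA hmax hXinf
  -- uniqueness of j
  have huniq : ∀ j', j' ≠ j → (Xg ∩ A j').Finite := by
    intro j' hne
    by_contra hfin
    rw [← Set.not_infinite, not_not] at hfin
    -- both A j and A j' are almost contained in Xg
    have hsub : ∀ j'', (Xg ∩ A j'').Infinite → (A i \ Lt g⁻¹ (A j'')).Finite := by
      intro j'' hj''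
      have h1 : (A j'' \ Xg).Finite := by
        have := noSplit hA hmax hXai j'' (by rwa [Set.inter_comm] at hj'')
        exact this
      -- translate by g⁻¹
      have h2 : (Lt g⁻¹ (A j'') \ A i).Finite := by
        have := Lt_finite g⁻¹ h1
        rwa [Lt_diff, hXg, Lt_Lt, inv_mul_cancel, Lt_one] at this
      have h3 : (Lt g⁻¹ (A j'')).Infinite := (Lt_infinite_iff _).mpr (hA.1 j'').1
      have h4 : ((Lt g⁻¹ (A j'')) ∩ A i).Infinite := inter_infinite_of_diff_finite h3 h2
      exact noSplit hA hmax (ai_lt g⁻¹ (hA.1 j'').2) i (by rwa [Set.inter_comm] at h4)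
    have hj2 := hsub j hj
    have hj'2 := hsub j' hfin
    have hd : Lt g⁻¹ (A j) ∩ Lt g⁻¹ (A j') = ∅ := by
      rw [← Lt_inter, Set.disjoint_iff_inter_eq_empty.mp (hA.2 (fun e => hne e.symm))]
      ext x; simp [mem_Lt]
    refine (hA.1 i).1 ((hj2.union hj'2).subset fun x hx => ?_)
    by_cases hmem : x ∈ Lt g⁻¹ (A j)
    · refine Or.inr ⟨hx, fun hc => ?_⟩
      have : x ∈ Lt g⁻¹ (A j) ∩ Lt g⁻¹ (A j') := ⟨hmem, hc⟩
      simp [hd] at this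
    · exact Or.inl ⟨hx, hmem⟩
  refine ⟨j, ?_, ?_⟩
  · -- Xg \ A j is finite
    have hcov : Xg \ A j ⊆ (⋃ j' : Fin k, if j' = j then ∅ else Xg ∩ A j') ∪ (⋃ l, A l)ᶜ := by
      intro x hx
      by_cases h : x ∈ ⋃ l, A l
      · obtain ⟨l, hl⟩ := mem_iUnion.mp h
        have hlj : l ≠ j := fun e => hx.2 (e ▸ hl)
        refine Or.inl (mem_iUnion.mpr ⟨l, ?_⟩)
        rw [if_neg hlj]
        exact ⟨hx.1, hl⟩
      · exact Or.inr h
    refine ((Set.finite_iUnion fun j' => ?_).union (Rfin hA hmax)).subset hcov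
    by_cases h : j' = j
    · simp [h]
    · simpa [h] using huniq j' h
  · rw [Set.inter_comm] at hj
    exact noSplit hA hmax hXai j hj

end Max


/-! ### The finite-index subgroup stabilizing all atoms -/

section Stab

variable {k : ℕ} {A : Fin k → Set G}

/-- the subgroup of elements whose left translation preserves every atom mod finite -/
def stab (A : Fin k → Set G) (hA : IsFam A) (hmax : ∀ B : Fin (k+1) → Set G, ¬ IsFam B) :
    Subgroup G where
  carrier := {h | ∀ i, EqF (Lt h (A i)) (A i)}
  one_mem' := by intro i; rw [Lt_one]; exact EqF.refl _
  mul_mem' := by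
    intro a b ha hb i
    rw [← Lt_Lt]
    exact ((hb i).lt a).trans (ha i)
  inv_mem' := by
    intro a ha i
    obtain ⟨j, hj⟩ := rigidity hA hmax a⁻¹ i
    have h1 : EqF (Lt a (Lt a⁻¹ (A i))) (Lt a (A j)) := hj.lt a
    rw [Lt_Lt, mul_inv_cancel, Lt_one] at h1
    have h2 : EqF (A i) (A j) := h1.trans (ha j)
    have hij : i = j := by
      refine atom_unique hA (hA.1 i).1 ?_ h2.1
      simp [EqF]
    subst hij
    exact hj

variable (hA : IsFam A) (hmax : ∀ B : Fin (k+1) → Set G, ¬ IsFam B)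

lemma mem_stab {h : G} : h ∈ stab A hA hmax ↔ ∀ i, EqF (Lt h (A i)) (A i) := Iff.rfl

/-- the index map -/
noncomputable def sigmaMap (g : G) (i : Fin k) : Fin k :=
  Classical.choose (rigidity hA hmax g i)

lemma sigmaMap_spec (g : G) (i : Fin k) :
    EqF (Lt g (A i)) (A (sigmaMap hA hmax g i)) :=
  Classical.choose_spec (rigidity hA hmax g i)

lemma sigma_inj {a b : G} (h : sigmaMap hA hmax a = sigmaMap hA hmax b) :
    a⁻¹ * b ∈ stab A hA hmax := by
  intro i
  have ha := sigmaMap_spec hA hmax a i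
  have hb := sigmaMap_spec hA hmax b i
  rw [h] at ha
  -- Lt (a⁻¹ b) (A i) = Lt a⁻¹ (Lt b (A i)) ≈ Lt a⁻¹ (A (σb i)) ≈ A i
  have h1 : EqF (Lt a⁻¹ (Lt b (A i))) (Lt a⁻¹ (A (sigmaMap hA hmax b i))) := hb.lt a⁻¹
  have h2 : EqF (Lt a⁻¹ (Lt a (A i))) (Lt a⁻¹ (A (sigmaMap hA hmax b i))) := ha.lt a⁻¹
  rw [Lt_Lt, inv_mul_cancel, Lt_one] at h2
  rw [Lt_Lt] at h1
  exact h1.trans h2.symm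

lemma finite_quotient : Finite (G ⧸ stab A hA hmax) := by
  have : Finite (Fin k → Fin k) := by infer_instance
  refine Finite.of_injective (fun q : G ⧸ stab A hA hmax => sigmaMap hA hmax q.out) ?_
  intro q q' hqq
  have h := sigma_inj hA hmax hqq
  have := (QuotientGroup.eq (s := stab A hA hmax)).mpr h
  rwa [QuotientGroup.out_eq', QuotientGroup.out_eq'] at this

/-- each element belongs to a right coset of `stab` indexed by the (finite) quotient -/
lemma cover_by_right_cosets (g : G) :
    g ∈ Rt ((stab A hA hmax : Subgroup G) : Set G)
      ((Quotient.out ((g⁻¹ : G) : G ⧸ stab A hA hmax))⁻¹) := by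
  rw [mem_Rt, inv_inv]
  have : ((g⁻¹ : G) : G ⧸ stab A hA hmax) = Quotient.out ((g⁻¹ : G) : G ⧸ stab A hA hmax) := by
    rw [QuotientGroup.out_eq']
  have h2 := (QuotientGroup.eq (s := stab A hA hmax)).mp this
  rwa [inv_inv] at h2

lemma interH_infinite (i : Fin k) :
    ((A i) ∩ ((stab A hA hmax : Subgroup G) : Set G)).Infinite := by
  set H := ((stab A hA hmax : Subgroup G) : Set G) with hH
  have hfq : Finite (G ⧸ stab A hA hmax) := finite_quotient hA hmax
  have hcov : A i ⊆ ⋃ q : G ⧸ stab A hA hmax, (A i ∩ Rt H (Quotient.out q)⁻¹) := by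
    intro x hx
    refine mem_iUnion.mpr ⟨((x⁻¹ : G) : G ⧸ stab A hA hmax), hx, ?_⟩
    exact cover_by_right_cosets hA hmax x
  have hinf : (⋃ q : G ⧸ stab A hA hmax, (A i ∩ Rt H (Quotient.out q)⁻¹)).Infinite :=
    (hA.1 i).1.mono hcov
  obtain ⟨q, hq⟩ := exists_infinite_of_iUnion hinf
  set t := (Quotient.out q)⁻¹ with ht
  -- translate back by t⁻¹
  have h1 : (Rt (A i ∩ Rt H t) t⁻¹).Infinite := (Rt_infinite_iff _).mpr hq
  have h2 : Rt (A i ∩ Rt H t) t⁻¹ = Rt (A i) t⁻¹ ∩ H := by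
    ext x
    simp only [mem_Rt, mem_inter_iff]
    constructor
    · rintro ⟨h1', h2'⟩
      exact ⟨by simpa using h1', by simpa using h2'⟩
    · rintro ⟨h1', h2'⟩
      exact ⟨by simpa using h1', by simpa using h2'⟩
  rw [h2] at h1
  have h3 : ((Rt (A i) t⁻¹ ∩ H) \ A i).Finite :=
    (ai_diff_fin' (hA.1 i).2 t⁻¹).subset (fun x hx => ⟨hx.1.1, hx.2⟩)
  have h4 := inter_infinite_of_diff_finite h1 h3
  refine h4.mono ?_
  intro x hx
  exact ⟨hx.2, hx.1.2⟩

end Stab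


/-! ### The non-finitely-generated branch with an infinite finitely generated
subgroup of the stabilizer: leads to `Group.FG G`. -/

section SBranch

variable {k : ℕ} {A : Fin k → Set G}

lemma exists_infinite_of_biUnion {S : Set G} (hS : S.Finite) {f : G → Set G}
    {X : Set G} (hXinf : X.Infinite) (hcov : X ⊆ ⋃ p ∈ S, f p) :
    ∃ p ∈ S, (X ∩ f p).Infinite := by
  by_contra hc
  push_neg at hc
  refine hXinf ((hS.biUnion (fun p hp => hc p hp)).subset ?_)
  intro x hx
  obtain ⟨p, hp, hfp⟩ := by simpa using hcov hx
  exact Set.mem_biUnion hp ⟨hx, hfp⟩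

lemma sigma_trick (hA : IsFam A) (hmax : ∀ B : Fin (k+1) → Set G, ¬ IsFam B)
    {i₁ i₂ : Fin k} (hne : i₁ ≠ i₂)
    {T : Set G} (hTfin : T.Finite) (hTstab : T ⊆ ((stab A hA hmax : Subgroup G) : Set G))
    (hKinf : ((Subgroup.closure T : Subgroup G) : Set G).Infinite) :
    Group.FG G := by
  set K := Subgroup.closure T with hK
  have hKstab : K ≤ stab A hA hmax := (Subgroup.closure_le _).mpr hTstab
  -- a right coset fully inside an atom forces the subgroup almost inside the atom
  have hfull : ∀ (i : Fin k) (x : G), (∀ w ∈ K, w * x ∈ A i) → ((K : Set G) \ A i).Finite := by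
    intro i x hx
    have hsub : (K : Set G) ⊆ Rt (A i) x⁻¹ := by
      intro w hw
      rw [mem_Rt, inv_inv]
      exact hx w hw
    exact (ai_diff_fin' (hA.1 i).2 x⁻¹).subset (fun y hy => ⟨hsub hy.1, hy.2⟩)
  -- pick an atom with no full coset
  have hesc : ∃ i, (i = i₁ ∨ i = i₂) ∧ ∀ x : G, ∃ w ∈ K, w * x ∉ A i := by
    by_contra hc
    push_neg at hc
    obtain ⟨x₁, hx₁⟩ := hc i₁ (Or.inl rfl)
    obtain ⟨x₂, hx₂⟩ := hc i₂ (Or.inr rfl)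
    have h1 := hfull i₁ x₁ hx₁
    have h2 := hfull i₂ x₂ hx₂
    have hd : A i₁ ∩ A i₂ = ∅ := Set.disjoint_iff_inter_eq_empty.mp (hA.2 hne)
    refine hKinf ((h1.union h2).subset ?_)
    intro w hw
    by_cases hw1 : w ∈ A i₁
    · refine Or.inr ⟨hw, fun hw2 => ?_⟩
      have : w ∈ A i₁ ∩ A i₂ := ⟨hw1, hw2⟩
      simp [hd] at this
    · exact Or.inl ⟨hw, hw1⟩
  obtain ⟨istar, _, hesc⟩ := hesc
  set C := A istar with hC
  -- the boundary
  set Bd := ⋃ s ∈ T, ((C \ Lt s⁻¹ C) ∪ (C \ Lt s C)) with hBd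
  have hBdfin : Bd.Finite := by
    refine hTfin.biUnion (fun s hs => ?_)
    have hst : s ∈ stab A hA hmax := hTstab hs
    have hst' : s⁻¹ ∈ stab A hA hmax := (stab A hA hmax).inv_mem hst
    exact ((hst' istar).2).union ((hst istar).2)
  -- the walk lemma
  have hwalk : ∀ (l : List G), (∀ y ∈ l, y ∈ T ∪ T⁻¹) → ∀ c, c ∈ C → l.prod * c ∉ C →
      ∃ p ∈ Bd, ∃ w ∈ K, c = w * p := by
    intro l
    induction l with
    | nil =>
      intro _ c hc hnc
      simp only [List.prod_nil, one_mul] at hnc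
      exact absurd hc hnc
    | cons x l' ih =>
      intro hmem c hc hesc'
      have hx : x ∈ T ∪ T⁻¹ := hmem x (by simp)
      have hl' : ∀ y ∈ l', y ∈ T ∪ T⁻¹ := fun y hy => hmem y (by simp [hy])
      by_cases hd : l'.prod * c ∈ C
      · have hxd : x * (l'.prod * c) ∉ C := by
          rw [List.prod_cons, mul_assoc] at hesc'
          exact hesc'
        have hdB : l'.prod * c ∈ Bd := by
          have hmem2 : l'.prod * c ∈ C \ Lt x⁻¹ C := by
            refine ⟨hd, fun hcl => ?_⟩
            rw [mem_Lt, inv_inv] at hcl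
            exact hxd hcl
          rcases hx with hx | hx
          · exact Set.mem_biUnion hx (Or.inl hmem2)
          · rw [Set.mem_inv] at hx
            exact Set.mem_biUnion hx (Or.inr hmem2)
        have hlK : l'.prod ∈ K := by
          refine list_prod_mem ?_
          intro y hy
          rcases hl' y hy with h | h
          · exact Subgroup.subset_closure h
          · rw [Set.mem_inv] at h
            have h2 : y⁻¹ ∈ K := Subgroup.subset_closure h
            simpa using K.inv_mem h2
        exact ⟨l'.prod * c, hdB, (l'.prod)⁻¹, Subgroup.inv_mem K hlK, by
          rw [inv_mul_cancel_left]⟩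
      · exact ih hl' c hc hd
  -- every element of C is in a coset K·p with p in the boundary
  have hcov : ∀ c ∈ C, ∃ p ∈ Bd, c ∈ Rt (K : Set G) p := by
    intro c hc
    obtain ⟨w, hwK, hwc⟩ := hesc c
    have hw' : w ∈ Submonoid.closure (T ∪ T⁻¹) := by
      rw [← Subgroup.closure_toSubmonoid]
      exact hwK
    obtain ⟨l, hl, hlp⟩ := Submonoid.exists_list_of_mem_closure hw'
    obtain ⟨p, hp, w', hw', hcw⟩ := hwalk l hl c hc (by rwa [hlp])
    refine ⟨p, hp, ?_⟩
    rw [mem_Rt, hcw]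
    simpa using hw'
  -- some boundary point whose coset meets C infinitely
  have hCinf : C.Infinite := (hA.1 istar).1
  obtain ⟨pstar, hpstar, hpinf⟩ := exists_infinite_of_biUnion hBdfin hCinf
    (fun c hc => by
      obtain ⟨p, hp, hcp⟩ := hcov c hc
      exact Set.mem_biUnion hp hcp)
  -- every coset meets C infinitely
  have hall : ∀ z : G, (C ∩ Rt (K : Set G) z).Infinite := by
    intro z
    set g := pstar⁻¹ * z with hg
    have himg : Rt (C ∩ Rt (K : Set G) pstar) g ⊆ Rt C g ∩ Rt (K : Set G) z := by
      intro y hy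
      rw [mem_Rt] at hy
      constructor
      · rw [mem_Rt]; exact hy.1
      · have h2 := hy.2
        rw [mem_Rt] at h2 ⊢
        have : y * g⁻¹ * pstar⁻¹ = y * z⁻¹ := by
          rw [hg]; group
        rwa [this] at h2
    have hinf2 : (Rt C g ∩ Rt (K : Set G) z).Infinite :=
      (((Rt_infinite_iff g).mpr hpinf).mono himg)
    have hfin2 : ((Rt C g ∩ Rt (K : Set G) z) \ C).Finite :=
      (ai_diff_fin' (hA.1 istar).2 g).subset (fun y hy => ⟨hy.1.1, hy.2⟩)
    exact (inter_infinite_of_diff_finite hinf2 hfin2).mono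
      (fun y hy => ⟨hy.2, hy.1.2⟩)
  -- so every element lies in a coset K·p with p in the boundary
  have hallcov : ∀ z : G, ∃ p ∈ Bd, z ∈ Rt (K : Set G) p := by
    intro z
    obtain ⟨y, hyC, hyz⟩ := (hall z).nonempty
    obtain ⟨p, hp, hyp⟩ := hcov y hyC
    refine ⟨p, hp, ?_⟩
    rw [mem_Rt] at hyz hyp ⊢
    have : z * p⁻¹ = (y * z⁻¹)⁻¹ * (y * p⁻¹) := by group
    rw [this]
    exact K.mul_mem (K.inv_mem hyz) hyp
  -- conclude G is finitely generated
  rw [Group.fg_iff]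
  refine ⟨T ∪ Bd, ?_, hTfin.union hBdfin⟩
  rw [Subgroup.eq_top_iff']
  intro z
  obtain ⟨p, hp, hzp⟩ := hallcov z
  rw [mem_Rt] at hzp
  have h1 : z * p⁻¹ ∈ Subgroup.closure (T ∪ Bd) :=
    Subgroup.closure_mono (Set.subset_union_left) hzp
  have h2 : p ∈ Subgroup.closure (T ∪ Bd) :=
    Subgroup.subset_closure (Set.mem_union_right _ hp)
  have := Subgroup.mul_mem _ h1 h2
  rwa [inv_mul_cancel_right] at this

end SBranch


/-! ### Splitting inside a locally finite subgroup -/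

lemma diff_rt_eq (Y : Set G) (h : G) : Y \ Rt Y h = Rt (Rt Y h⁻¹ \ Y) h := by
  ext c
  simp only [mem_diff, mem_Rt, inv_inv]
  constructor
  · rintro ⟨h1, h2⟩
    exact ⟨by simpa using h1, h2⟩
  · rintro ⟨h1, h2⟩
    exact ⟨by simpa using h1, h2⟩

section LocFin

variable (Lv : ℕ → Subgroup G) (C : Set G)

/-- the set of `c ∈ C` whose "coset-depth" in `C` is exactly `v` -/
def fibSet (v : ℕ) : Set G :=
  {c | c ∈ C ∧ (∀ s ∈ Lv v, c * s ∈ C) ∧ ¬(∀ s ∈ Lv (v+1), c * s ∈ C)}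

variable {Lv C}

lemma fib_eq_of_mem {v v' : ℕ} {c : G} (hmono : ∀ {m m'}, m ≤ m' → Lv m ≤ Lv m')
    (h1 : c ∈ fibSet Lv C v) (h2 : c ∈ fibSet Lv C v') : v = v' := by
  by_contra hne
  rcases lt_or_gt_of_ne hne with h | h
  · exact h1.2.2 (fun s hs => h2.2.1 s (hmono (by omega) hs))
  · exact h2.2.2 (fun s hs => h1.2.1 s (hmono (by omega) hs))

lemma fib_finite (H : Subgroup G) (hLvH : ∀ m, Lv m ≤ H)
    (hLvfin : ∀ m, ((Lv m : Subgroup G) : Set G).Finite)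
    (hCb : ∀ s ∈ H, {c | c ∈ C ∧ c * s ∉ C}.Finite) (v : ℕ) :
    (fibSet Lv C v).Finite := by
  have hsub : fibSet Lv C v ⊆ ⋃ s ∈ ((Lv (v+1) : Subgroup G) : Set G),
      {c | c ∈ C ∧ c * s ∉ C} := by
    rintro c ⟨hc, _, hnfull⟩
    push_neg at hnfull
    obtain ⟨s, hs, hcs⟩ := hnfull
    exact Set.mem_biUnion hs ⟨hc, hcs⟩
  exact (((hLvfin (v+1)).biUnion (fun s hs => hCb s (hLvH _ hs))).subset hsub)

lemma fib_shift {m v : ℕ} {h c : G} (hmono : ∀ {m m'}, m ≤ m' → Lv m ≤ Lv m')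
    (hh : h ∈ Lv m) (hmv : m ≤ v) (hc : c ∈ fibSet Lv C v) : c * h ∈ fibSet Lv C v := by
  obtain ⟨hcC, hfull, hnfull⟩ := hc
  have hhv : h ∈ Lv v := hmono hmv hh
  refine ⟨hfull h hhv, ?_, ?_⟩
  · intro s hs
    rw [mul_assoc]
    exact hfull _ ((Lv v).mul_mem hhv hs)
  · intro hfull'
    refine hnfull (fun s hs => ?_)
    have h1 := hfull' (h⁻¹ * s) ((Lv (v+1)).mul_mem ((Lv (v+1)).inv_mem (hmono (by omega) hh)) hs)
    rwa [mul_assoc, mul_inv_cancel_left] at h1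

lemma fib_cover (H : Subgroup G) (hLv0 : Lv 0 = ⊥) (hLvcov : ∀ h ∈ H, ∃ m, h ∈ Lv m)
    (hnf : ∀ c ∈ C, ∃ h ∈ H, c * h ∉ C) {c : G} (hc : c ∈ C) :
    ∃ v, c ∈ fibSet Lv C v := by
  classical
  have hex : ∃ v, ¬(∀ s ∈ Lv v, c * s ∈ C) := by
    obtain ⟨h, hhH, hh⟩ := hnf c hc
    obtain ⟨m, hm⟩ := hLvcov h hhH
    exact ⟨m, fun hfull => hh (hfull h hm)⟩
  have h0 : ∀ s ∈ Lv 0, c * s ∈ C := by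
    intro s hs
    rw [hLv0, Subgroup.mem_bot] at hs
    subst hs
    simpa using hc
  have hv₀spec := Nat.find_spec hex
  have hv₀pos : Nat.find hex ≠ 0 := by
    intro h
    rw [h] at hv₀spec
    exact hv₀spec h0
  obtain ⟨v, hv⟩ := Nat.exists_eq_succ_of_ne_zero hv₀pos
  refine ⟨v, hc, not_not.mp (Nat.find_min hex (by omega)), ?_⟩
  rw [← Nat.succ_eq_add_one, ← hv]
  exact hv₀spec

lemma locfin_split (H : Subgroup G)
    (hLv0 : Lv 0 = ⊥)
    (hLvH : ∀ m, Lv m ≤ H) (hmono : ∀ {m m'}, m ≤ m' → Lv m ≤ Lv m')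
    (hLvcov : ∀ h ∈ H, ∃ m, h ∈ Lv m) (hLvfin : ∀ m, ((Lv m : Subgroup G) : Set G).Finite)
    (hCinf : C.Infinite)
    (hCb : ∀ s ∈ H, {c | c ∈ C ∧ c * s ∉ C}.Finite)
    (hnf : ∀ c ∈ C, ∃ h ∈ H, c * h ∉ C) :
    ∃ X X' : Set G, X ⊆ C ∧ X' ⊆ C ∧ X ∩ X' = ∅ ∧ X.Infinite ∧ X'.Infinite ∧
      (∀ h ∈ H, (X \ Rt X h).Finite ∧ (Rt X h \ X).Finite) := by
  classical
  have hNinf : {v : ℕ | (fibSet Lv C v).Nonempty}.Infinite := by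
    intro hNfin
    refine hCinf ((hNfin.biUnion
      (fun v _ => fib_finite H hLvH hLvfin hCb v)).subset ?_)
    intro c hc
    obtain ⟨v, hv⟩ := fib_cover H hLv0 hLvcov hnf hc
    exact Set.mem_biUnion (⟨c, hv⟩ : (fibSet Lv C v).Nonempty) hv
  have emb := hNinf.natEmbedding
  have hembmem : ∀ a : ℕ, (fibSet Lv C ((emb a : _) : ℕ)).Nonempty := fun a => (emb a).2
  have hembinj : ∀ {a b : ℕ}, ((emb a : _) : ℕ) = ((emb b : _) : ℕ) → a = b := by
    intro a b hab
    exact emb.injective (Subtype.ext hab)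
  set v1 : ℕ → ℕ := fun j => ((emb (2*j) : _) : ℕ) with hv1
  set v2 : ℕ → ℕ := fun j => ((emb (2*j+1) : _) : ℕ) with hv2
  refine ⟨⋃ j, fibSet Lv C (v1 j), ⋃ j, fibSet Lv C (v2 j), ?_, ?_, ?_, ?_, ?_, ?_⟩
  · rintro c hc
    obtain ⟨j, hj⟩ := mem_iUnion.mp hc
    exact hj.1
  · rintro c hc
    obtain ⟨j, hj⟩ := mem_iUnion.mp hc
    exact hj.1
  · ext c
    simp only [mem_inter_iff, mem_empty_iff_false, iff_false]
    rintro ⟨hc1, hc2⟩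
    obtain ⟨j, hj⟩ := mem_iUnion.mp hc1
    obtain ⟨j', hj'⟩ := mem_iUnion.mp hc2
    have := hembinj (fib_eq_of_mem hmono hj hj')
    omega
  · refine Set.infinite_of_injective_forall_mem
      (f := fun j : ℕ => Classical.choose (hembmem (2*j))) ?_ ?_
    · intro a b hab
      have ha := Classical.choose_spec (hembmem (2*a))
      have hb := Classical.choose_spec (hembmem (2*b))
      have hab' : Classical.choose (hembmem (2*a)) = Classical.choose (hembmem (2*b)) := hab
      rw [hab'] at ha
      have := hembinj (fib_eq_of_mem hmono ha hb)
      omega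
    · intro j
      exact mem_iUnion.mpr ⟨j, Classical.choose_spec (hembmem (2*j))⟩
  · refine Set.infinite_of_injective_forall_mem
      (f := fun j : ℕ => Classical.choose (hembmem (2*j+1))) ?_ ?_
    · intro a b hab
      have ha := Classical.choose_spec (hembmem (2*a+1))
      have hb := Classical.choose_spec (hembmem (2*b+1))
      have hab' : Classical.choose (hembmem (2*a+1)) = Classical.choose (hembmem (2*b+1)) := hab
      rw [hab'] at ha
      have := hembinj (fib_eq_of_mem hmono ha hb)
      omega
    · intro j
      exact mem_iUnion.mpr ⟨j, Classical.choose_spec (hembmem (2*j+1))⟩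
  · intro h hh
    have honeside : ∀ h' ∈ H, ((⋃ j, fibSet Lv C (v1 j)) \ Rt (⋃ j, fibSet Lv C (v1 j)) h').Finite := by
      intro h' hh'
      obtain ⟨m, hm⟩ := hLvcov h' hh'
      have hsub : (⋃ j, fibSet Lv C (v1 j)) \ Rt (⋃ j, fibSet Lv C (v1 j)) h' ⊆
          ⋃ v ∈ Set.Iio m, fibSet Lv C v := by
        rintro c ⟨hc, hcr⟩
        obtain ⟨j, hj⟩ := mem_iUnion.mp hc
        by_cases hlt : v1 j < m
        · exact Set.mem_biUnion hlt hj
        · exfalso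
          refine hcr ?_
          rw [mem_Rt]
          exact mem_iUnion.mpr ⟨j, fib_shift hmono ((Lv m).inv_mem hm) (by omega) hj⟩
      exact (((Set.finite_Iio m).biUnion
        (fun v _ => fib_finite H hLvH hLvfin hCb v)).subset hsub)
    refine ⟨honeside h hh, ?_⟩
    have h2 := honeside h⁻¹ (H.inv_mem hh)
    have h3 : Rt (⋃ j, fibSet Lv C (v1 j)) h \ (⋃ j, fibSet Lv C (v1 j)) =
        Rt ((⋃ j, fibSet Lv C (v1 j)) \ Rt (⋃ j, fibSet Lv C (v1 j)) h⁻¹) h := by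
      ext c
      simp only [mem_diff, mem_Rt, inv_inv, inv_mul_cancel_right]
    rw [h3]
    exact Rt_finite _ h2

end LocFin


/-! ### Lifting an `H`-almost-invariant subset of a finite-index subgroup -/

section Lift

variable (H : Subgroup G)

lemma mul_out_mem (g : G) : g * (Quotient.out ((g⁻¹ : G) : G ⧸ H)) ∈ H := by
  have h := QuotientGroup.out_eq' ((g⁻¹ : G) : G ⧸ H)
  have h2 := (QuotientGroup.eq (s := H)).mp h
  have h3 := H.inv_mem h2
  simpa using h3

/-- Lift of a subset of `H` to `G` using the canonical right transversal. -/
def liftSet (X : Set G) : Set G := ⋃ q : G ⧸ H, Rt X ((Quotient.out q)⁻¹)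

lemma lift_rt_diff_finite (hfq : Finite (G ⧸ H)) (X : Set G)
    (hX : ∀ h ∈ H, (Rt X h \ X).Finite) (g : G) :
    (Rt (liftSet H X) g \ liftSet H X).Finite := by
  haveI := hfq
  have hrt : Rt (liftSet H X) g = ⋃ q : G ⧸ H, Rt X ((Quotient.out q)⁻¹ * g) := by
    rw [liftSet, Rt_iUnion]
    exact iUnion_congr (fun q => Rt_Rt _ _)
  rw [hrt, Set.iUnion_diff]
  refine Set.finite_iUnion (fun q => ?_)
  set u := (Quotient.out q)⁻¹ * g with hu
  set o := Quotient.out ((u⁻¹ : G) : G ⧸ H) with ho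
  have hh0 : u * o ∈ H := mul_out_mem H u
  refine ((Rt_finite o⁻¹ (hX _ hh0)).subset ?_)
  rw [Rt_diff]
  intro y hy
  have h1 : Rt (Rt X (u * o)) o⁻¹ = Rt X u := by
    rw [Rt_Rt, mul_assoc, mul_inv_cancel, mul_one]
  constructor
  · rw [h1]; exact hy.1
  · intro hc
    exact hy.2 (mem_iUnion.mpr ⟨((u⁻¹ : G) : G ⧸ H), hc⟩)

lemma lift_ai (hfq : Finite (G ⧸ H)) (X : Set G)
    (hX : ∀ h ∈ H, (Rt X h \ X).Finite) : AlmostInvariant (liftSet H X) := by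
  refine almostInvariant_of (fun g => ⟨?_, lift_rt_diff_finite H hfq X hX g⟩)
  rw [diff_rt_eq]
  exact Rt_finite _ (lift_rt_diff_finite H hfq X hX g⁻¹)

end Lift

/-! ### The β-branch: the stabilizer is locally finite -/

section Beta

variable {k : ℕ} {A : Fin k → Set G}

lemma beta_branch (hA : IsFam A) (hmax : ∀ B : Fin (k+1) → Set G, ¬ IsFam B)
    {i₀ i₁ : Fin k} (hne : i₀ ≠ i₁) (e : ℕ → G)
    (heH : ∀ n, e n ∈ stab A hA hmax)
    (hecov : ∀ h ∈ stab A hA hmax, ∃ n, e n = h)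
    (hLfin : ∀ m : ℕ,
      ((Subgroup.closure (e '' {i | i < m}) : Subgroup G) : Set G).Finite) :
    False := by
  classical
  set St := stab A hA hmax with hSt
  have hfq : Finite (G ⧸ St) := finite_quotient hA hmax
  set Lv : ℕ → Subgroup G := fun m => Subgroup.closure (e '' {i | i < m}) with hLv
  have hLv0 : Lv 0 = ⊥ := by
    have : e '' {i | i < 0} = ∅ := by
      ext x; simp
    rw [hLv]
    simp only [this, Subgroup.closure_empty]
  have hLvH : ∀ m, Lv m ≤ St := by
    intro m
    refine (Subgroup.closure_le _).mpr ?_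
    rintro x ⟨n, _, rfl⟩
    exact heH n
  have hmono : ∀ {m m' : ℕ}, m ≤ m' → Lv m ≤ Lv m' := by
    intro m m' hmm
    exact Subgroup.closure_mono (Set.image_mono (fun i (hi : i < m) => by
      simp only [Set.mem_setOf_eq] at *
      omega))
  have hLvcov : ∀ h ∈ St, ∃ m, h ∈ Lv m := by
    intro h hh
    obtain ⟨n, hn⟩ := hecov h hh
    exact ⟨n+1, Subgroup.subset_closure ⟨n, by simp, hn⟩⟩
  set C := A i₀ ∩ (St : Set G) with hC
  have hCinf : C.Infinite := interH_infinite hA hmax i₀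
  have hCb : ∀ s ∈ St, {c | c ∈ C ∧ c * s ∉ C}.Finite := by
    intro s hs
    refine ((ai_diff_fin (hA.1 i₀).2 s⁻¹).subset ?_)
    rintro c ⟨⟨hc1, hc2⟩, hc3⟩
    refine ⟨hc1, fun hmem => hc3 ⟨?_, St.mul_mem hc2 hs⟩⟩
    rw [mem_Rt, inv_inv] at hmem
    exact hmem
  have hnf : ∀ c ∈ C, ∃ h ∈ St, c * h ∉ C := by
    intro c hc
    obtain ⟨x, hx⟩ := (interH_infinite hA hmax i₁).nonempty
    refine ⟨c⁻¹ * x, St.mul_mem (St.inv_mem hc.2) hx.2, ?_⟩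
    rw [mul_inv_cancel_left]
    intro hmem
    have hd : A i₀ ∩ A i₁ = ∅ := Set.disjoint_iff_inter_eq_empty.mp (hA.2 hne)
    have : x ∈ A i₀ ∩ A i₁ := ⟨hmem.1, hx.1⟩
    simp [hd] at this
  obtain ⟨X, X', hXC, hX'C, hXX', hXinf, hX'inf, hXai⟩ :=
    locfin_split (Lv := Lv) (C := C) St hLv0 hLvH hmono hLvcov hLfin hCinf hCb hnf
  set L := liftSet St X with hL
  have hLai : AlmostInvariant L := lift_ai St hfq X (fun h hh => (hXai h hh).2)
  -- the lift splits the atom `A i₀`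
  set q₁ : G ⧸ St := ((1 : G) : G ⧸ St) with hq₁
  set t₀ := (Quotient.out q₁)⁻¹ with ht₀
  have ht₀St : t₀ ∈ St := by
    have := mul_out_mem St 1
    simp only [inv_one] at this
    rw [ht₀]
    refine St.inv_mem ?_
    simpa [hq₁] using this
  have hXsub : X ⊆ (St : Set G) := fun x hx => (hXC hx).2
  have hX'sub : X' ⊆ (St : Set G) := fun x hx => (hX'C hx).2
  have hpiece : Rt X t₀ ⊆ L := fun y hy => mem_iUnion.mpr ⟨q₁, hy⟩
  have h1 : (A i₀ ∩ L).Infinite := by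
    have hfin : (Rt X t₀ \ X).Finite := (hXai t₀ ht₀St).2
    have hinf : (Rt X t₀).Infinite := (Rt_infinite_iff _).mpr hXinf
    refine (inter_infinite_of_diff_finite hinf hfin).mono ?_
    rintro y ⟨hy1, hy2⟩
    exact ⟨(hXC hy2).1, hpiece hy1⟩
  have h2 : (A i₀ \ L).Infinite := by
    -- X' meets L only inside the `q₁` piece, and there only finitely
    have hXL : (X' ∩ L).Finite := by
      have hsub : X' ∩ L ⊆ Rt X t₀ \ X := by
        rintro y ⟨hy1, hy2⟩
        obtain ⟨q, hq⟩ := mem_iUnion.mp hy2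
        have hqq : q = q₁ := by
          have hyH : y ∈ St := hX'sub hy1
          have hmem := hq
          rw [mem_Rt, inv_inv] at hmem
          have houtq : Quotient.out q ∈ St := by
            have := St.mul_mem (St.inv_mem (hXsub hmem)) hyH
            simpa [mul_assoc] using this
          have : ((Quotient.out q : G) : G ⧸ St) = ((1 : G) : G ⧸ St) := by
            rw [QuotientGroup.eq]
            simpa using St.inv_mem houtq
          rw [QuotientGroup.out_eq'] at this
          rw [this, hq₁]
        rw [hqq] at hq
        refine ⟨hq, fun hc => ?_⟩
        have hmem2 : y ∈ X ∩ X' := ⟨hc, hy1⟩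
        rw [hXX'] at hmem2
        exact hmem2
      exact ((hXai t₀ ht₀St).2).subset hsub
    have : (X' \ L).Infinite := by
      intro hfin
      refine hX'inf ((hXL.union hfin).subset ?_)
      intro x hx
      by_cases hL' : x ∈ L
      · exact Or.inl ⟨hx, hL'⟩
      · exact Or.inr ⟨hx, hL'⟩
    refine this.mono ?_
    rintro y ⟨hy1, hy2⟩
    exact ⟨(hX'C hy1).1, hy2⟩
  obtain ⟨B, hB⟩ := isFam_split hA i₀ hLai (by rwa [Set.inter_comm] at h1 ⊢) h2
  exact hmax B hB

end Beta


/-! ### Cayley-graph machinery for the finitely generated case -/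

section Graph

variable (S : Set G)

/-- adjacency in the right Cayley graph -/
def Adj (x y : G) : Prop := ∃ s ∈ S, y = x * s

/-- reachability -/
def Reach (x y : G) : Prop := Relation.ReflTransGen (Adj S) x y

/-- reachability avoiding a set `F` -/
def ReachF (F : Set G) (x y : G) : Prop :=
  Relation.ReflTransGen (fun a b => Adj S a b ∧ a ∉ F ∧ b ∉ F) x y

/-- reachability within a set `W` -/
def ReachIn (W : Set G) (x y : G) : Prop :=
  Relation.ReflTransGen (fun a b => Adj S a b ∧ a ∈ W ∧ b ∈ W) x y

/-- component of `x` in the complement of `F` -/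
def Comp (F : Set G) (x : G) : Set G := {y | ReachF S F x y}

variable {S}

lemma adj_symm (hSsym : ∀ s ∈ S, s⁻¹ ∈ S) {x y : G} (h : Adj S x y) : Adj S y x := by
  obtain ⟨s, hs, rfl⟩ := h
  exact ⟨s⁻¹, hSsym s hs, by rw [mul_assoc, mul_inv_cancel, mul_one]⟩

lemma adj_lt {x y : G} (g : G) (h : Adj S x y) : Adj S (g * x) (g * y) := by
  obtain ⟨s, hs, rfl⟩ := h
  exact ⟨s, hs, by rw [mul_assoc]⟩

lemma reach_symm (hSsym : ∀ s ∈ S, s⁻¹ ∈ S) {x y : G} (h : Reach S x y) : Reach S y x :=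
  (@Relation.ReflTransGen.stdSymm _ (Adj S) ⟨fun _ _ => adj_symm hSsym⟩).symm _ _ h

lemma reach_lt {x y : G} (g : G) (h : Reach S x y) : Reach S (g * x) (g * y) := by
  induction h with
  | refl => exact Relation.ReflTransGen.refl
  | tail _ hstep ih => exact Relation.ReflTransGen.tail ih (adj_lt g hstep)

lemma reach_trans {x y z : G} (h1 : Reach S x y) (h2 : Reach S y z) : Reach S x z :=
  Relation.ReflTransGen.trans h1 h2

lemma reach_all (hSsym : ∀ s ∈ S, s⁻¹ ∈ S) (hSgen : Subgroup.closure S = ⊤)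
    (x y : G) : Reach S x y := by
  have key : ∀ w : G, Reach S x (x * w) := by
    intro w
    have hw : w ∈ Subgroup.closure S := by rw [hSgen]; exact Subgroup.mem_top w
    induction hw using Subgroup.closure_induction with
    | mem s hs => exact Relation.ReflTransGen.single ⟨s, hs, rfl⟩
    | one => rw [mul_one]; exact Relation.ReflTransGen.refl
    | mul w₁ w₂ _ _ ih₁ ih₂ =>
      refine reach_trans ih₁ ?_
      have := reach_lt (x * w₁ * x⁻¹) ih₂
      have he1 : x * w₁ * x⁻¹ * x = x * w₁ := by group
      have he2 : x * w₁ * x⁻¹ * (x * w₂) = x * (w₁ * w₂) := by group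
      rwa [he1, he2] at this
    | inv w _ ih =>
      have h1 := reach_symm hSsym ih
      have h2 := reach_lt (x * w⁻¹ * x⁻¹) h1
      have he1 : x * w⁻¹ * x⁻¹ * (x * w) = x := by group
      have he2 : x * w⁻¹ * x⁻¹ * x = x * w⁻¹ := by group
      rwa [he1, he2] at h2
  have := key (x⁻¹ * y)
  rwa [mul_inv_cancel_left] at this

lemma reachF_notMem {F : Set G} {x y : G} (h : ReachF S F x y) (hx : x ∉ F) : y ∉ F := by
  induction h with
  | refl => exact hx
  | tail _ hstep _ => exact hstep.2.2

lemma reachF_symm (hSsym : ∀ s ∈ S, s⁻¹ ∈ S) {F : Set G} {x y : G}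
    (h : ReachF S F x y) : ReachF S F y x :=
  (@Relation.ReflTransGen.stdSymm _ (fun a b => Adj S a b ∧ a ∉ F ∧ b ∉ F)
    ⟨fun _ _ hab => ⟨adj_symm hSsym hab.1, hab.2.2, hab.2.1⟩⟩).symm _ _ h

lemma reachF_trans {F : Set G} {x y z : G} (h1 : ReachF S F x y) (h2 : ReachF S F y z) :
    ReachF S F x z :=
  Relation.ReflTransGen.trans h1 h2

lemma reachF_lt {F : Set G} {x y : G} (g : G) (h : ReachF S F x y) :
    ReachF S (Lt g F) (g * x) (g * y) := by
  induction h with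
  | refl => exact Relation.ReflTransGen.refl
  | tail _ hstep ih =>
    refine Relation.ReflTransGen.tail ih ⟨adj_lt g hstep.1, ?_, ?_⟩
    · intro hc
      rw [mem_Lt, inv_mul_cancel_left] at hc
      exact hstep.2.1 hc
    · intro hc
      rw [mem_Lt, inv_mul_cancel_left] at hc
      exact hstep.2.2 hc

lemma reachF_of_lt {F : Set G} {x y : G} (g : G)
    (h : ReachF S (Lt g F) (g * x) (g * y)) : ReachF S F x y := by
  have := reachF_lt (S := S) g⁻¹ h
  have e1 : g⁻¹ * (g * x) = x := by group
  have e2 : g⁻¹ * (g * y) = y := by group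
  have e3 : Lt g⁻¹ (Lt g F) = F := by rw [Lt_Lt, inv_mul_cancel, Lt_one]
  rwa [e1, e2, e3] at this

lemma mem_comp_self (F : Set G) (x : G) : x ∈ Comp S F x := Relation.ReflTransGen.refl

lemma comp_eq (hSsym : ∀ s ∈ S, s⁻¹ ∈ S) {F : Set G} {x y : G} (h : ReachF S F x y) :
    Comp S F x = Comp S F y := by
  ext z
  exact ⟨fun hz => reachF_trans (reachF_symm hSsym h) hz,
    fun hz => reachF_trans h hz⟩

lemma comp_lt (F : Set G) (g x : G) : Comp S (Lt g F) (g * x) = Lt g (Comp S F x) := by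
  ext z
  simp only [Comp, mem_setOf_eq, mem_Lt]
  constructor
  · intro hz
    have : z = g * (g⁻¹ * z) := by group
    rw [this] at hz
    simpa using reachF_of_lt g hz
  · intro hz
    have := reachF_lt g hz
    have e : g * (g⁻¹ * z) = z := by group
    rwa [e] at this

/-- the boundary-path lemma: a path from outside `F` into `F` meets the neighbourhood of `F` -/
lemma exists_boundary {F : Set G} {x z : G} (h : Reach S x z) (hx : x ∉ F) (hz : z ∈ F) :
    ∃ y, ReachF S F x y ∧ ∃ s ∈ S, y * s ∈ F := by
  induction h using Relation.ReflTransGen.head_induction_on with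
  | refl => exact absurd hz hx
  | @head a b hab hrest ih =>
    by_cases hb : b ∈ F
    · obtain ⟨s, hs, rfl⟩ := hab
      exact ⟨a, Relation.ReflTransGen.refl, s, hs, hb⟩
    · obtain ⟨y, hy1, hy2⟩ := ih hb
      exact ⟨y, Relation.ReflTransGen.head ⟨hab, hx, hb⟩ hy1, hy2⟩

lemma reachIn_mono {W W' : Set G} (h : W ⊆ W') {x y : G} (hr : ReachIn S W x y) :
    ReachIn S W' x y := by
  induction hr with
  | refl => exact Relation.ReflTransGen.refl
  | tail _ hstep ih =>
    exact Relation.ReflTransGen.tail ih ⟨hstep.1, h hstep.2.1, h hstep.2.2⟩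

lemma reachIn_lt {W : Set G} {x y : G} (g : G) (h : ReachIn S W x y) :
    ReachIn S (Lt g W) (g * x) (g * y) := by
  induction h with
  | refl => exact Relation.ReflTransGen.refl
  | tail _ hstep ih =>
    refine Relation.ReflTransGen.tail ih ⟨adj_lt g hstep.1, ?_, ?_⟩
    · rw [mem_Lt, inv_mul_cancel_left]; exact hstep.2.1
    · rw [mem_Lt, inv_mul_cancel_left]; exact hstep.2.2

lemma reachIn_to_reachF {W F : Set G} (hWF : ∀ w ∈ W, w ∉ F) {x y : G}
    (h : ReachIn S W x y) : ReachF S F x y := by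
  induction h with
  | refl => exact Relation.ReflTransGen.refl
  | tail _ hstep ih =>
    exact Relation.ReflTransGen.tail ih ⟨hstep.1, hWF _ hstep.2.1, hWF _ hstep.2.2⟩

lemma reachF_switch {F F' : Set G} {x y : G} (h : ReachF S F x y)
    (havoid : ∀ z ∈ Comp S F x, z ∉ F') : ReachF S F' x y := by
  have key : ∀ z, ReachF S F x z → ReachF S F' x z := by
    intro z hz
    induction hz with
    | refl => exact Relation.ReflTransGen.refl
    | @tail b c hab hstep ih =>
      exact Relation.ReflTransGen.tail ih
        ⟨hstep.1, havoid b hab, havoid c (Relation.ReflTransGen.tail hab hstep)⟩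
  exact key y h

/-- connected witness sets for reachability -/
lemma exists_conn_witness {x y : G} (h : Reach S x y) :
    ∃ W : Set G, W.Finite ∧ x ∈ W ∧ y ∈ W ∧ ∀ p ∈ W, ReachIn S W x p := by
  induction h with
  | refl =>
    exact ⟨{x}, Set.finite_singleton x, rfl, rfl, fun p hp => by
      rw [hp]; exact Relation.ReflTransGen.refl⟩
  | @tail b c hab hstep ih =>
    obtain ⟨W, hWfin, hxW, hbW, hW⟩ := ih
    refine ⟨insert c W, hWfin.insert c, Set.mem_insert_of_mem _ hxW,
      Set.mem_insert _ _, ?_⟩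
    intro p hp
    rcases Set.mem_insert_iff.mp hp with rfl | hpW
    · refine Relation.ReflTransGen.tail
        (reachIn_mono (Set.subset_insert _ _) (hW b hbW)) ?_
      exact ⟨hstep, Set.mem_insert_of_mem _ hbW, Set.mem_insert _ _⟩
    · exact reachIn_mono (Set.subset_insert _ _) (hW p hpW)

/-- a finite connected hull of a finite set, containing `1` -/
lemma exists_hull (hSsym : ∀ s ∈ S, s⁻¹ ∈ S) (hSgen : Subgroup.closure S = ⊤)
    (F₀ : Set G) (hF₀ : F₀.Finite) :
    ∃ Fh : Set G, Fh.Finite ∧ F₀ ⊆ Fh ∧ (1 : G) ∈ Fh ∧ ∀ f ∈ Fh, ReachIn S Fh 1 f := by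
  classical
  have hW : ∀ f : G, ∃ W : Set G, W.Finite ∧ (1:G) ∈ W ∧ f ∈ W ∧ ∀ p ∈ W, ReachIn S W 1 p :=
    fun f => exists_conn_witness (reach_all hSsym hSgen 1 f)
  set Fh := ⋃ f ∈ insert (1:G) F₀, Classical.choose (hW f) with hFh
  refine ⟨Fh, ?_, ?_, ?_, ?_⟩
  · exact (hF₀.insert 1).biUnion (fun f _ => (Classical.choose_spec (hW f)).1)
  · intro f hf
    exact Set.mem_biUnion (Set.mem_insert_of_mem _ hf) (Classical.choose_spec (hW f)).2.2.1
  · exact Set.mem_biUnion (Set.mem_insert _ _) (Classical.choose_spec (hW 1)).2.1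
  · intro f hf
    obtain ⟨f', hf', hff'⟩ := Set.mem_iUnion₂.mp hf
    refine reachIn_mono ?_ ((Classical.choose_spec (hW f')).2.2.2 f hff')
    intro p hp
    exact Set.mem_biUnion hf' hp

end Graph


/-! ### The finitely generated branch (Freudenthal–Hopf) -/

section FGBranch

variable {k : ℕ} {A : Fin k → Set G}

lemma eq_of_mem_inter (hA : IsFam A) {i j : Fin k} {z : G}
    (hi : z ∈ A i) (hj : z ∈ A j) : i = j := by
  by_contra hne
  exact Set.disjoint_left.mp (hA.2 hne) hi hj

lemma fg_branch (hA : IsFam A) (hmax : ∀ B : Fin (k+1) → Set G, ¬ IsFam B)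
    {i₀ i₁ i₂ : Fin k} (h01 : i₀ ≠ i₁) (h02 : i₀ ≠ i₂) (h12 : i₁ ≠ i₂)
    (hfg : Group.FG G) : False := by
  classical
  obtain ⟨S₀, hS₀gen, hS₀fin⟩ := Group.fg_iff.mp hfg
  set S := S₀ ∪ S₀⁻¹ with hS
  have hSfin : S.Finite := hS₀fin.union hS₀fin.inv
  have hSsym : ∀ s ∈ S, s⁻¹ ∈ S := by
    rintro s (hs | hs)
    · exact Or.inr (Set.inv_mem_inv.mpr hs)
    · exact Or.inl (by rwa [← Set.mem_inv])
  have hSgen : Subgroup.closure S = ⊤ := by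
    rw [eq_top_iff, ← hS₀gen]
    exact Subgroup.closure_mono Set.subset_union_left
  -- the base finite set: all boundaries and the complement of the atoms
  set F₀ : Set G := (⋃ i, ⋃ s ∈ S, (A i \ Rt (A i) s⁻¹)) ∪ (⋃ i, A i)ᶜ with hF₀
  have hF₀fin : F₀.Finite := by
    refine Set.Finite.union ?_ (Rfin hA hmax)
    exact Set.finite_iUnion (fun i => hSfin.biUnion (fun s _ => ai_diff_fin (hA.1 i).2 s⁻¹))
  obtain ⟨Fh, hFhfin, hF₀Fh, h1Fh, hFhconn⟩ := exists_hull hSsym hSgen F₀ hF₀fin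
  -- points outside Fh lie in atoms and do not cross boundaries
  have hcov : ∀ x, x ∉ Fh → ∃ i, x ∈ A i := by
    intro x hx
    by_contra hc
    push_neg at hc
    exact hx (hF₀Fh (Or.inr (fun hmem => by
      obtain ⟨i, hi⟩ := mem_iUnion.mp hmem
      exact hc i hi)))
  have hcross : ∀ x, x ∉ Fh → ∀ i : Fin k, x ∈ A i → ∀ s ∈ S, x * s ∈ A i := by
    intro x hx i hxi s hs
    by_contra hc
    refine hx (hF₀Fh (Or.inl (mem_iUnion.mpr ⟨i, Set.mem_biUnion hs ⟨hxi, ?_⟩⟩)))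
    rw [mem_Rt, inv_inv]
    exact hc
  have hmonochrome : ∀ {x y : G} {i : Fin k}, ReachF S Fh x y → x ∈ A i → y ∈ A i := by
    intro x y i hreach hx
    induction hreach with
    | refl => exact hx
    | @tail b c hab hstep ih =>
      obtain ⟨s, hs, rfl⟩ := hstep.1
      exact hcross b hstep.2.1 i ih s hs
  -- each atom contains an infinite component
  have hcomp : ∀ i : Fin k, ∃ a, a ∉ Fh ∧ a ∈ A i ∧ (Comp S Fh a).Infinite ∧
      Comp S Fh a ⊆ A i := by
    intro i
    have hAinf : (A i \ Fh).Infinite := (hA.1 i).1.diff hFhfin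
    set NF : Set G := ⋃ s ∈ S, Rt Fh s⁻¹ with hNF
    have hNFfin : NF.Finite := hSfin.biUnion (fun s _ => Rt_finite _ hFhfin)
    have hcover : A i \ Fh ⊆ ⋃ y ∈ NF, Comp S Fh y := by
      rintro x ⟨hxA, hxF⟩
      obtain ⟨y, hy1, s, hs, hys⟩ := exists_boundary (reach_all hSsym hSgen x 1) hxF h1Fh
      refine Set.mem_biUnion (Set.mem_biUnion hs ?_) (reachF_symm hSsym hy1)
      rw [mem_Rt, inv_inv]
      exact hys
    obtain ⟨y, hy, hyinf⟩ := exists_infinite_of_biUnion hNFfin hAinf hcover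
    obtain ⟨a, ⟨⟨haA, haF⟩, hacomp⟩⟩ := hyinf.nonempty
    have hceq : Comp S Fh y = Comp S Fh a := comp_eq hSsym hacomp
    refine ⟨a, haF, haA, ?_, ?_⟩
    · rw [← hceq]
      exact hyinf.mono (fun z hz => hz.2)
    · intro z hz
      exact hmonochrome hz haA
  obtain ⟨a₀, ha₀F, ha₀A, hU₀inf, hU₀sub⟩ := hcomp i₀
  obtain ⟨a₁, ha₁F, ha₁A, hU₁inf, hU₁sub⟩ := hcomp i₁
  obtain ⟨a₂, ha₂F, ha₂A, hU₂inf, hU₂sub⟩ := hcomp i₂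
  -- pick a deep translate
  set bad : Set G := (fun pq : G × G => pq.2 * pq.1⁻¹) '' (Fh ×ˢ Fh) with hbad
  have hbadfin : bad.Finite := (hFhfin.prod hFhfin).image _
  obtain ⟨u, huU₀, hubad⟩ := (hU₀inf.diff hbadfin).nonempty
  have hdisj : ∀ p ∈ Fh, u * p ∉ Fh := by
    intro p hp hq
    refine hubad ⟨(p, u * p), ⟨hp, hq⟩, ?_⟩
    simp
  have hltsub : ∀ w ∈ Lt u Fh, w ∉ Fh := by
    intro w hw
    rw [mem_Lt] at hw
    have := hdisj _ hw
    rwa [mul_inv_cancel_left] at this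
  -- (i) u·Fh is inside the component U₀
  have hLtU₀ : Lt u Fh ⊆ Comp S Fh a₀ := by
    intro w hw
    rw [mem_Lt] at hw
    have hreach : ReachF S Fh u (u * (u⁻¹ * w)) := by
      have h1 := reachIn_lt (S := S) u (hFhconn _ hw)
      rw [mul_one] at h1
      exact reachIn_to_reachF hltsub h1
    rw [mul_inv_cancel_left] at hreach
    have hcompu : Comp S Fh a₀ = Comp S Fh u := comp_eq hSsym huU₀
    rw [hcompu]
    exact hreach
  -- (ii) the components of the other two atoms lie in the component of 1 avoiding u·Fh
  have hinside : ∀ (a : G) (i : Fin k), a ∉ Fh → a ∈ A i → Comp S Fh a ⊆ A i → i ≠ i₀ →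
      Comp S Fh a ⊆ Comp S (Lt u Fh) 1 := by
    intro a i haF haA hUsub hnei y hy
    have havoidU : ∀ z ∈ Comp S Fh a, z ∉ Lt u Fh := by
      intro z hz hzu
      have hz0 : z ∈ A i₀ := hU₀sub (hLtU₀ hzu)
      exact Set.disjoint_left.mp (hA.2 hnei) (hUsub hz) hz0
    have hFhavoid : ∀ w ∈ Fh, w ∉ Lt u Fh := by
      intro w hw hwu
      exact (hltsub w hwu) hw
    obtain ⟨ystar, hystar, s, hs, hysF⟩ :=
      exists_boundary (reach_all hSsym hSgen a 1) haF h1Fh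
    have hyU : ystar ∈ Comp S Fh a := hystar
    have seg1 : ReachF S (Lt u Fh) 1 (ystar * s) :=
      reachIn_to_reachF hFhavoid (hFhconn _ hysF)
    have seg2 : ReachF S (Lt u Fh) (ystar * s) ystar := by
      refine Relation.ReflTransGen.single ⟨⟨s⁻¹, hSsym s hs, ?_⟩, hFhavoid _ hysF, havoidU _ hyU⟩
      rw [mul_assoc, mul_inv_cancel, mul_one]
    have seg3 : ReachF S (Lt u Fh) ystar y := by
      have hwithin : ReachF S Fh ystar y := reachF_trans (reachF_symm hSsym hystar) hy
      refine reachF_switch hwithin ?_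
      intro z hz
      refine havoidU z ?_
      rw [comp_eq hSsym hystar]
      exact hz
    exact reachF_trans seg1 (reachF_trans seg2 seg3)
  -- (iii) but that component is a translate of a single component, hence inside u·(one atom)
  have huinvF : u⁻¹ ∉ Fh := by
    intro hc
    have := hdisj u⁻¹ hc
    rw [mul_inv_cancel] at this
    exact this h1Fh
  obtain ⟨c, hc⟩ := hcov u⁻¹ huinvF
  have hW₀ : Comp S (Lt u Fh) 1 = Lt u (Comp S Fh u⁻¹) := by
    have := comp_lt (S := S) Fh u u⁻¹
    rwa [mul_inv_cancel] at this
  have hV₀sub : Comp S Fh u⁻¹ ⊆ A c := fun z hz => hmonochrome hz hc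
  obtain ⟨c', hc'⟩ := rigidity hA hmax u c
  have hkey : ∀ (a : G) (i : Fin k), a ∉ Fh → a ∈ A i → Comp S Fh a ⊆ A i →
      (Comp S Fh a).Infinite → i ≠ i₀ → i = c' := by
    intro a i haF haA hUsub hUinf hnei
    have hsub2 : Comp S Fh a ⊆ Lt u (A c) := by
      intro z hz
      have := hinside a i haF haA hUsub hnei hz
      rw [hW₀] at this
      exact (Set.image_mono hV₀sub) this
    have hdiff : (Comp S Fh a \ A c').Finite :=
      hc'.1.subset (fun z hz => ⟨hsub2 hz.1, hz.2⟩)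
    obtain ⟨z, hz1, hz2⟩ := (inter_infinite_of_diff_finite hUinf hdiff).nonempty
    exact eq_of_mem_inter hA (hUsub hz1) hz2
  have he1 : i₁ = c' := hkey a₁ i₁ ha₁F ha₁A hU₁sub hU₁inf (Ne.symm h01)
  have he2 : i₂ = c' := hkey a₂ i₂ ha₂F ha₂A hU₂sub hU₂inf (Ne.symm h02)
  exact h12 (he1.trans he2.symm)

end FGBranch


/-! ### Assembly -/

lemma master {G : Type*} [Group G] [Countable G]
    (h3 : ∃ A : Fin 3 → Set G, IsFam A) (n : ℕ) : ∃ A : Fin n → Set G, IsFam A := by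
  classical
  by_contra hn
  have hmono : ∀ {m m' : ℕ}, m ≤ m' → (∃ A : Fin m' → Set G, IsFam A) →
      ∃ A : Fin m → Set G, IsFam A := by
    rintro m m' h ⟨A, hA⟩
    exact ⟨A ∘ Fin.castLE h, isFam_castLE h hA⟩
  have h3n : 3 ≤ n := by
    by_contra hc
    exact hn (hmono (by omega) h3)
  set P : ℕ → Prop := fun m => ∃ A : Fin m → Set G, IsFam A with hP
  have hPk : P (Nat.findGreatest P n) := Nat.findGreatest_spec h3n h3
  have hk3 : 3 ≤ Nat.findGreatest P n := Nat.le_findGreatest h3n h3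
  set k := Nat.findGreatest P n with hk
  have hkn : k ≤ n := Nat.findGreatest_le n
  have hklt : k < n := by
    rcases lt_or_eq_of_le hkn with h | h
    · exact h
    · exact absurd (h ▸ hPk) hn
  have hmax0 : ¬ P (k+1) :=
    Nat.findGreatest_is_greatest (P := P) (n := n) (k := k+1) (by omega) (by omega)
  obtain ⟨A, hA⟩ := hPk
  have hmax : ∀ B : Fin (k+1) → Set G, ¬ IsFam B := fun B hB => hmax0 ⟨B, hB⟩
  set i₀ : Fin k := ⟨0, by omega⟩ with hi₀
  set i₁ : Fin k := ⟨1, by omega⟩ with hi₁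
  set i₂ : Fin k := ⟨2, by omega⟩ with hi₂
  have h01 : i₀ ≠ i₁ := by simp [hi₀, hi₁, Fin.ext_iff]
  have h02 : i₀ ≠ i₂ := by simp [hi₀, hi₂, Fin.ext_iff]
  have h12 : i₁ ≠ i₂ := by simp [hi₁, hi₂, Fin.ext_iff]
  by_cases hfg : Group.FG G
  · exact fg_branch hA hmax h01 h02 h12 hfg
  · -- enumerate the stabilizer
    have hne : Nonempty ↥(stab A hA hmax) := ⟨⟨1, (stab A hA hmax).one_mem⟩⟩
    obtain ⟨f, hf⟩ := exists_surjective_nat ↥(stab A hA hmax)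
    set e : ℕ → G := fun n => (f n : G) with he
    have heH : ∀ n, e n ∈ stab A hA hmax := fun n => (f n).2
    have hecov : ∀ h ∈ stab A hA hmax, ∃ n, e n = h := by
      intro h hh
      obtain ⟨n, hn'⟩ := hf ⟨h, hh⟩
      exact ⟨n, by rw [he]; simp [hn']⟩
    by_cases hLfin : ∀ m : ℕ,
        ((Subgroup.closure (e '' {i | i < m}) : Subgroup G) : Set G).Finite
    · exact beta_branch hA hmax h01 e heH hecov hLfin
    · push_neg at hLfin
      obtain ⟨m, hm⟩ := hLfin
      refine hfg (sigma_trick hA hmax h01 (T := e '' {i | i < m}) ?_ ?_ ?_)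
      · exact Set.Finite.image _ (Set.finite_Iio m)
      · rintro x ⟨j, _, rfl⟩
        exact heH j
      · exact hm

end EndsAux

/-- Theorem 5.10: if a countable group contains three pairwise disjoint infinite almost
invariant subsets, then it contains `n` of them for every `n` (the number of ends is
either infinite or at most 2). -/
theorem ends_infinite_or_le_two
    {G : Type*} [Group G] [Countable G]
    (h3 : ∃ A : Fin 3 → Set G, (∀ i, (A i).Infinite ∧ AlmostInvariant (A i)) ∧
      Pairwise (Function.onFun Disjoint A))
    (n : ℕ) :
    ∃ A : Fin n → Set G, (∀ i, (A i).Infinite ∧ AlmostInvariant (A i)) ∧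
      Pairwise (Function.onFun Disjoint A) := by
  exact EndsAux.master h3 n
end
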